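/- arXiv:1910.08653 — 6 statements merged into one kernel-verified Lean document; each statement's English description precedes it below -/
import Mathlib

section
/- Let M be the quotient of the set of 12-tuples (k,l,r,d,e₁,…,e₈) ∈ ℤ¹² satisfying the constraint that 0 ≤ d < gcd(k,l,r) when (k,l,r) ≠ (0,0,0) (and d ∈ ℤ arbitrary when k = l = r = 0) by Φ-equivalence, and let N be the quotient of ℤ¹² by ψ-equivalence. Then the map F induces a well-defined bijection from M onto N; explicitly: (i) if T, T′ ∈ ℤ¹² are Φ-equivalent then F(T) and F(T′) are ψ-equivalent; (ii) every element of ℤ¹² is ψ-equivalent to F(T) for some T satisfying the constraint on d; and (iii) if T and T′ both satisfy the constraint on d and F(T), F(T′) are ψ-equivalent, then T and T′ are Φ-equivalent. -/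
/-- A 12-tuple of integers, with coordinates written `(c₁,…,c₆,f₁,…,f₄,t₁,t₂)`. -/
structure Tuple : Type where
  c1 : ℤ
  c2 : ℤ
  c3 : ℤ
  c4 : ℤ
  c5 : ℤ
  c6 : ℤ
  f1 : ℤ
  f2 : ℤ
  f3 : ℤ
  f4 : ℤ
  t1 : ℤ
  t2 : ℤ

/-- The move ψ₂₁ : f₃↦f₃+c₅, f₄↦f₄−c₁, t₁↦t₁+f₁. -/
def psi21 : Equiv.Perm Tuple where
  toFun x := { x with f3 := x.f3 + x.c5, f4 := x.f4 - x.c1, t1 := x.t1 + x.f1 }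
  invFun x := { x with f3 := x.f3 - x.c5, f4 := x.f4 + x.c1, t1 := x.t1 - x.f1 }
  left_inv x := by cases x; simp
  right_inv x := by cases x; simp

/-- The move ψ₄₁ : f₂↦f₂+c₆, f₃↦f₃−c₅, t₂↦t₂−f₁. -/
def psi41 : Equiv.Perm Tuple where
  toFun x := { x with f2 := x.f2 + x.c6, f3 := x.f3 - x.c5, t2 := x.t2 - x.f1 }
  invFun x := { x with f2 := x.f2 - x.c6, f3 := x.f3 + x.c5, t2 := x.t2 + x.f1 }
  left_inv x := by cases x; simp
  right_inv x := by cases x; simp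

/-- The move ψ₁₂ : f₃↦f₃−c₄, f₄↦f₄+c₂, t₁↦t₁+f₂. -/
def psi12 : Equiv.Perm Tuple where
  toFun x := { x with f3 := x.f3 - x.c4, f4 := x.f4 + x.c2, t1 := x.t1 + x.f2 }
  invFun x := { x with f3 := x.f3 + x.c4, f4 := x.f4 - x.c2, t1 := x.t1 - x.f2 }
  left_inv x := by cases x; simp
  right_inv x := by cases x; simp

/-- The move ψ₃₂ : f₁↦f₁+c₆, f₄↦f₄−c₂, t₂↦t₂−f₂. -/
def psi32 : Equiv.Perm Tuple where
  toFun x := { x with f1 := x.f1 + x.c6, f4 := x.f4 - x.c2, t2 := x.t2 - x.f2 }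
  invFun x := { x with f1 := x.f1 - x.c6, f4 := x.f4 + x.c2, t2 := x.t2 + x.f2 }
  left_inv x := by cases x; simp
  right_inv x := by cases x; simp

/-- The move ψ₄₃ : f₁↦f₁+c₅, f₂↦f₂−c₄, t₁↦t₁+f₃. -/
def psi43 : Equiv.Perm Tuple where
  toFun x := { x with f1 := x.f1 + x.c5, f2 := x.f2 - x.c4, t1 := x.t1 + x.f3 }
  invFun x := { x with f1 := x.f1 - x.c5, f2 := x.f2 + x.c4, t1 := x.t1 - x.f3 }
  left_inv x := by cases x; simp
  right_inv x := by cases x; simp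

/-- The move ψ₂₃ : f₁↦f₁−c₅, f₄↦f₄+c₃, t₂↦t₂−f₃. -/
def psi23 : Equiv.Perm Tuple where
  toFun x := { x with f1 := x.f1 - x.c5, f4 := x.f4 + x.c3, t2 := x.t2 - x.f3 }
  invFun x := { x with f1 := x.f1 + x.c5, f4 := x.f4 - x.c3, t2 := x.t2 + x.f3 }
  left_inv x := by cases x; simp
  right_inv x := by cases x; simp

/-- The move ψ₃₄ : f₁↦f₁−c₁, f₂↦f₂+c₂, t₁↦t₁+f₄. -/
def psi34 : Equiv.Perm Tuple where
  toFun x := { x with f1 := x.f1 - x.c1, f2 := x.f2 + x.c2, t1 := x.t1 + x.f4 }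
  invFun x := { x with f1 := x.f1 + x.c1, f2 := x.f2 - x.c2, t1 := x.t1 - x.f4 }
  left_inv x := by cases x; simp
  right_inv x := by cases x; simp

/-- The move ψ₁₄ : f₂↦f₂−c₂, f₃↦f₃+c₃, t₂↦t₂−f₄. -/
def psi14 : Equiv.Perm Tuple where
  toFun x := { x with f2 := x.f2 - x.c2, f3 := x.f3 + x.c3, t2 := x.t2 - x.f4 }
  invFun x := { x with f2 := x.f2 + x.c2, f3 := x.f3 - x.c3, t2 := x.t2 + x.f4 }
  left_inv x := by cases x; simp
  right_inv x := by cases x; simp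

/-- The list of the eight ψ-moves. -/
def psiMoves : List (Equiv.Perm Tuple) :=
  [psi21, psi41, psi12, psi32, psi43, psi23, psi34, psi14]

/-- Two tuples are ψ-equivalent if one is obtained from the other by a finite
composition of the eight ψ-moves and their inverses, i.e. they are related by the
equivalence relation generated by single applications of the moves. -/
def PsiEquiv : Tuple → Tuple → Prop :=
  Relation.EqvGen (fun x y => ∃ g ∈ psiMoves, g x = y)

/-- A 12-tuple of integers `(k,l,r,d,e₁,…,e₈)` in Levine's coordinates. -/
structure LTuple : Type where
  k : ℤ
  l : ℤ
  r : ℤ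
  d : ℤ
  e1 : ℤ
  e2 : ℤ
  e3 : ℤ
  e4 : ℤ
  e5 : ℤ
  e6 : ℤ
  e7 : ℤ
  e8 : ℤ

/-- Levine's move Φ₁ : adds (k,r,0,d,−d) to (e₄,e₅,e₆,e₇,e₈). -/
def Phi1 (x : LTuple) : LTuple :=
  { x with e4 := x.e4 + x.k, e5 := x.e5 + x.r, e7 := x.e7 + x.d, e8 := x.e8 - x.d }

/-- Levine's move Φ₂ : adds (−k,0,l,−d,0) to (e₄,e₅,e₆,e₇,e₈). -/
def Phi2 (x : LTuple) : LTuple :=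
  { x with e4 := x.e4 - x.k, e6 := x.e6 + x.l, e7 := x.e7 - x.d }

/-- Levine's move Φ₃ : adds (−e₁,0,e₃,e₅,0) to (e₄,e₅,e₆,e₇,e₈). -/
def Phi3 (x : LTuple) : LTuple :=
  { x with e4 := x.e4 - x.e1, e6 := x.e6 + x.e3, e7 := x.e7 + x.e5 }

/-- Levine's move Φ₄ : adds (e₂,e₃,0,e₆,−e₆) to (e₄,e₅,e₆,e₇,e₈). -/
def Phi4 (x : LTuple) : LTuple :=
  { x with e4 := x.e4 + x.e2, e5 := x.e5 + x.e3, e7 := x.e7 + x.e6, e8 := x.e8 - x.e6 }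

/-- Levine's move Φ₅ : adds (0,−e₁,−e₂,0,e₄) to (e₄,e₅,e₆,e₇,e₈). -/
def Phi5 (x : LTuple) : LTuple :=
  { x with e5 := x.e5 - x.e1, e6 := x.e6 - x.e2, e8 := x.e8 + x.e4 }

/-- Levine's move Φ₆(a,b,c) : adds (ce₂−be₁,−ae₁,0,ae₄,−abe₁−ce₆+be₅) to
(e₄,e₅,e₆,e₇,e₈), all right-hand sides computed from the tuple before the move. -/
def Phi6 (a b c : ℤ) (x : LTuple) : LTuple :=
  { x with
    e4 := x.e4 + (c * x.e2 - b * x.e1)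
    e5 := x.e5 - a * x.e1
    e7 := x.e7 + a * x.e4
    e8 := x.e8 + (-(a * b * x.e1) - c * x.e6 + b * x.e5) }

/-- One application of a Levine move (Φ₆ only with admissible parameters). -/
def PhiStep (x y : LTuple) : Prop :=
  y = Phi1 x ∨ y = Phi2 x ∨ y = Phi3 x ∨ y = Phi4 x ∨ y = Phi5 x ∨
    ∃ a b c : ℤ, a * x.k - b * x.r + c * x.l = 0 ∧ y = Phi6 a b c x

/-- Φ-equivalence: generated by Levine's moves and their inverses. -/
def PhiEquiv : LTuple → LTuple → Prop := Relation.EqvGen PhiStep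

/-- The map F : (k,l,r,d,e₁,…,e₈) ↦ (−l,−r,−k,−e₁,−e₂,−e₃,−e₆,e₅,−e₄,d,e₇+e₈,−e₇),
written in the coordinates (c₁,…,c₆,f₁,…,f₄,t₁,t₂). -/
def F (x : LTuple) : Tuple :=
  ⟨-x.l, -x.r, -x.k, -x.e1, -x.e2, -x.e3, -x.e6, x.e5, -x.e4, x.d, x.e7 + x.e8, -x.e7⟩

/-- The constraint on `d`: when (k,l,r) ≠ (0,0,0), require 0 ≤ d < gcd(k,l,r). -/
def DCon (x : LTuple) : Prop :=
  ¬(x.k = 0 ∧ x.l = 0 ∧ x.r = 0) →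
    0 ≤ x.d ∧ x.d < (Int.gcd x.k (Int.gcd x.l x.r) : ℤ)

section AuxiliaryLemmas

open Relation

theorem PsiEquiv.refl' (x : Tuple) : PsiEquiv x x := Relation.EqvGen.refl x

theorem PsiEquiv.trans' {x y z : Tuple} (h1 : PsiEquiv x y) (h2 : PsiEquiv y z) :
    PsiEquiv x z := Relation.EqvGen.trans x y z h1 h2

theorem PsiEquiv.symm' {x y : Tuple} (h : PsiEquiv x y) : PsiEquiv y x :=
  Relation.EqvGen.symm x y h

theorem psiEquiv_of_eq {x y : Tuple} (h : x = y) : PsiEquiv x y := h ▸ PsiEquiv.refl' x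

theorem psi_step (g : Equiv.Perm Tuple) (hg : g ∈ psiMoves) (x : Tuple) :
    PsiEquiv x (g x) := Relation.EqvGen.rel x (g x) ⟨g, hg, rfl⟩

theorem PhiEquiv.refl' (x : LTuple) : PhiEquiv x x := Relation.EqvGen.refl x

theorem PhiEquiv.trans' {x y z : LTuple} (h1 : PhiEquiv x y) (h2 : PhiEquiv y z) :
    PhiEquiv x z := Relation.EqvGen.trans x y z h1 h2

theorem PhiEquiv.symm' {x y : LTuple} (h : PhiEquiv x y) : PhiEquiv y x :=
  Relation.EqvGen.symm x y h

theorem phiEquiv_of_eq {x y : LTuple} (h : x = y) : PhiEquiv x y := h ▸ PhiEquiv.refl' x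

/-- Closed form for the `n`-th power of ψ₂₁. -/
def psi21It (n : ℤ) (x : Tuple) : Tuple :=
  { x with f3 := x.f3 + n * x.c5, f4 := x.f4 - n * x.c1, t1 := x.t1 + n * x.f1 }

def psi12It (n : ℤ) (x : Tuple) : Tuple :=
  { x with f3 := x.f3 - n * x.c4, f4 := x.f4 + n * x.c2, t1 := x.t1 + n * x.f2 }

def psi23It (n : ℤ) (x : Tuple) : Tuple :=
  { x with f1 := x.f1 - n * x.c5, f4 := x.f4 + n * x.c3, t2 := x.t2 - n * x.f3 }

def psi43It (n : ℤ) (x : Tuple) : Tuple :=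
  { x with f1 := x.f1 + n * x.c5, f2 := x.f2 - n * x.c4, t1 := x.t1 + n * x.f3 }

theorem psi21_it (x : Tuple) (n : ℤ) : PsiEquiv x (psi21It n x) := by
  induction n using Int.induction_on with
  | zero => refine psiEquiv_of_eq ?_; cases x; simp [psi21It]
  | succ n ih =>
      refine ih.trans' ?_
      have h : psi21 (psi21It n x) = psi21It (n + 1) x := by
        cases x; simp [psi21, psi21It]; try (and_intros <;> ring)
      rw [← h]; exact psi_step psi21 (by simp [psiMoves]) _
  | pred n ih =>
      refine ih.trans' (PsiEquiv.symm' ?_)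
      have h : psi21 (psi21It (-n - 1) x) = psi21It (-n) x := by
        cases x; simp [psi21, psi21It]; try (and_intros <;> ring)
      rw [← h]; exact psi_step psi21 (by simp [psiMoves]) _

theorem psi12_it (x : Tuple) (n : ℤ) : PsiEquiv x (psi12It n x) := by
  induction n using Int.induction_on with
  | zero => refine psiEquiv_of_eq ?_; cases x; simp [psi12It]
  | succ n ih =>
      refine ih.trans' ?_
      have h : psi12 (psi12It n x) = psi12It (n + 1) x := by
        cases x; simp [psi12, psi12It]; try (and_intros <;> ring)
      rw [← h]; exact psi_step psi12 (by simp [psiMoves]) _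
  | pred n ih =>
      refine ih.trans' (PsiEquiv.symm' ?_)
      have h : psi12 (psi12It (-n - 1) x) = psi12It (-n) x := by
        cases x; simp [psi12, psi12It]; try (and_intros <;> ring)
      rw [← h]; exact psi_step psi12 (by simp [psiMoves]) _

theorem psi23_it (x : Tuple) (n : ℤ) : PsiEquiv x (psi23It n x) := by
  induction n using Int.induction_on with
  | zero => refine psiEquiv_of_eq ?_; cases x; simp [psi23It]
  | succ n ih =>
      refine ih.trans' ?_
      have h : psi23 (psi23It n x) = psi23It (n + 1) x := by
        cases x; simp [psi23, psi23It]; try (and_intros <;> ring)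
      rw [← h]; exact psi_step psi23 (by simp [psiMoves]) _
  | pred n ih =>
      refine ih.trans' (PsiEquiv.symm' ?_)
      have h : psi23 (psi23It (-n - 1) x) = psi23It (-n) x := by
        cases x; simp [psi23, psi23It]; try (and_intros <;> ring)
      rw [← h]; exact psi_step psi23 (by simp [psiMoves]) _

theorem psi43_it (x : Tuple) (n : ℤ) : PsiEquiv x (psi43It n x) := by
  induction n using Int.induction_on with
  | zero => refine psiEquiv_of_eq ?_; cases x; simp [psi43It]
  | succ n ih =>
      refine ih.trans' ?_
      have h : psi43 (psi43It n x) = psi43It (n + 1) x := by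
        cases x; simp [psi43, psi43It]; try (and_intros <;> ring)
      rw [← h]; exact psi_step psi43 (by simp [psiMoves]) _
  | pred n ih =>
      refine ih.trans' (PsiEquiv.symm' ?_)
      have h : psi43 (psi43It (-n - 1) x) = psi43It (-n) x := by
        cases x; simp [psi43, psi43It]; try (and_intros <;> ring)
      rw [← h]; exact psi_step psi43 (by simp [psiMoves]) _

end AuxiliaryLemmas
section PhiIterates

/-- Closed forms for `n`-fold application of Levine's moves. -/
def phi1It (n : ℤ) (x : LTuple) : LTuple :=
  { x with e4 := x.e4 + n * x.k, e5 := x.e5 + n * x.r, e7 := x.e7 + n * x.d,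
           e8 := x.e8 - n * x.d }

def phi2It (n : ℤ) (x : LTuple) : LTuple :=
  { x with e4 := x.e4 - n * x.k, e6 := x.e6 + n * x.l, e7 := x.e7 - n * x.d }

def phi3It (n : ℤ) (x : LTuple) : LTuple :=
  { x with e4 := x.e4 - n * x.e1, e6 := x.e6 + n * x.e3, e7 := x.e7 + n * x.e5 }

def phi4It (n : ℤ) (x : LTuple) : LTuple :=
  { x with e4 := x.e4 + n * x.e2, e5 := x.e5 + n * x.e3, e7 := x.e7 + n * x.e6,
           e8 := x.e8 - n * x.e6 }

def phi5It (n : ℤ) (x : LTuple) : LTuple :=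
  { x with e5 := x.e5 - n * x.e1, e6 := x.e6 - n * x.e2, e8 := x.e8 + n * x.e4 }

theorem phi6_step (x : LTuple) (a b c : ℤ) (h : a * x.k - b * x.r + c * x.l = 0) :
    PhiEquiv x (Phi6 a b c x) :=
  Relation.EqvGen.rel _ _ (Or.inr (Or.inr (Or.inr (Or.inr (Or.inr ⟨a, b, c, h, rfl⟩)))))

theorem phi1_it (x : LTuple) (n : ℤ) : PhiEquiv x (phi1It n x) := by
  induction n using Int.induction_on with
  | zero => refine phiEquiv_of_eq ?_; cases x; simp [phi1It]
  | succ n ih =>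
      refine ih.trans' ?_
      have h : Phi1 (phi1It n x) = phi1It (n + 1) x := by
        cases x; simp [Phi1, phi1It]; try (and_intros <;> ring)
      rw [← h]; exact Relation.EqvGen.rel _ _ (Or.inl rfl)
  | pred n ih =>
      refine ih.trans' (PhiEquiv.symm' ?_)
      have h : Phi1 (phi1It (-n - 1) x) = phi1It (-n) x := by
        cases x; simp [Phi1, phi1It]; try (and_intros <;> ring)
      rw [← h]; exact Relation.EqvGen.rel _ _ (Or.inl rfl)

theorem phi2_it (x : LTuple) (n : ℤ) : PhiEquiv x (phi2It n x) := by
  induction n using Int.induction_on with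
  | zero => refine phiEquiv_of_eq ?_; cases x; simp [phi2It]
  | succ n ih =>
      refine ih.trans' ?_
      have h : Phi2 (phi2It n x) = phi2It (n + 1) x := by
        cases x; simp [Phi2, phi2It]; try (and_intros <;> ring)
      rw [← h]; exact Relation.EqvGen.rel _ _ (Or.inr (Or.inl rfl))
  | pred n ih =>
      refine ih.trans' (PhiEquiv.symm' ?_)
      have h : Phi2 (phi2It (-n - 1) x) = phi2It (-n) x := by
        cases x; simp [Phi2, phi2It]; try (and_intros <;> ring)
      rw [← h]; exact Relation.EqvGen.rel _ _ (Or.inr (Or.inl rfl))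

theorem phi3_it (x : LTuple) (n : ℤ) : PhiEquiv x (phi3It n x) := by
  induction n using Int.induction_on with
  | zero => refine phiEquiv_of_eq ?_; cases x; simp [phi3It]
  | succ n ih =>
      refine ih.trans' ?_
      have h : Phi3 (phi3It n x) = phi3It (n + 1) x := by
        cases x; simp [Phi3, phi3It]; try (and_intros <;> ring)
      rw [← h]; exact Relation.EqvGen.rel _ _ (Or.inr (Or.inr (Or.inl rfl)))
  | pred n ih =>
      refine ih.trans' (PhiEquiv.symm' ?_)
      have h : Phi3 (phi3It (-n - 1) x) = phi3It (-n) x := by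
        cases x; simp [Phi3, phi3It]; try (and_intros <;> ring)
      rw [← h]; exact Relation.EqvGen.rel _ _ (Or.inr (Or.inr (Or.inl rfl)))

theorem phi4_it (x : LTuple) (n : ℤ) : PhiEquiv x (phi4It n x) := by
  induction n using Int.induction_on with
  | zero => refine phiEquiv_of_eq ?_; cases x; simp [phi4It]
  | succ n ih =>
      refine ih.trans' ?_
      have h : Phi4 (phi4It n x) = phi4It (n + 1) x := by
        cases x; simp [Phi4, phi4It]; try (and_intros <;> ring)
      rw [← h]; exact Relation.EqvGen.rel _ _ (Or.inr (Or.inr (Or.inr (Or.inl rfl))))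
  | pred n ih =>
      refine ih.trans' (PhiEquiv.symm' ?_)
      have h : Phi4 (phi4It (-n - 1) x) = phi4It (-n) x := by
        cases x; simp [Phi4, phi4It]; try (and_intros <;> ring)
      rw [← h]; exact Relation.EqvGen.rel _ _ (Or.inr (Or.inr (Or.inr (Or.inl rfl))))

theorem phi5_it (x : LTuple) (n : ℤ) : PhiEquiv x (phi5It n x) := by
  induction n using Int.induction_on with
  | zero => refine phiEquiv_of_eq ?_; cases x; simp [phi5It]
  | succ n ih =>
      refine ih.trans' ?_
      have h : Phi5 (phi5It n x) = phi5It (n + 1) x := by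
        cases x; simp [Phi5, phi5It]; try (and_intros <;> ring)
      rw [← h]; exact Relation.EqvGen.rel _ _ (Or.inr (Or.inr (Or.inr (Or.inr (Or.inl rfl)))))
  | pred n ih =>
      refine ih.trans' (PhiEquiv.symm' ?_)
      have h : Phi5 (phi5It (-n - 1) x) = phi5It (-n) x := by
        cases x; simp [Phi5, phi5It]; try (and_intros <;> ring)
      rw [← h]; exact Relation.EqvGen.rel _ _ (Or.inr (Or.inr (Or.inr (Or.inr (Or.inl rfl)))))

end PhiIterates
section PartOne

/-- Part (i): a single Levine move maps to a ψ-equivalence under F. -/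
theorem phiStep_psiEquiv {x y : LTuple} (h : PhiStep x y) : PsiEquiv (F x) (F y) := by
  rcases h with h | h | h | h | h | ⟨a, b, c, hc, h⟩ <;> subst h
  · -- Φ₁  =  ψ₁₄
    have h : psi14 (F x) = F (Phi1 x) := by
      cases x; simp [F, Phi1, psi14]; try (and_intros <;> ring)
    rw [← h]; exact psi_step psi14 (by simp [psiMoves]) _
  · -- Φ₂  =  ψ₃₄⁻¹ ψ₁₄⁻¹
    refine PsiEquiv.symm' ?_
    have h : psi14 (psi34 (F (Phi2 x))) = F x := by
      cases x; simp [F, Phi2, psi14, psi34]; try (and_intros <;> ring)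
    rw [← h]
    exact ((psi_step psi34 (by simp [psiMoves]) _).trans'
      (psi_step psi14 (by simp [psiMoves]) _))
  · -- Φ₃  =  ψ₁₂ ψ₃₂
    have h : psi12 (psi32 (F x)) = F (Phi3 x) := by
      cases x; simp [F, Phi3, psi12, psi32]; try (and_intros <;> ring)
    rw [← h]
    exact ((psi_step psi32 (by simp [psiMoves]) _).trans'
      (psi_step psi12 (by simp [psiMoves]) _))
  · -- Φ₄  =  ψ₄₁⁻¹
    refine PsiEquiv.symm' ?_
    have h : psi41 (F (Phi4 x)) = F x := by
      cases x; simp [F, Phi4, psi41]; try (and_intros <;> ring)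
    rw [← h]; exact psi_step psi41 (by simp [psiMoves]) _
  · -- Φ₅  =  ψ₄₃⁻¹
    refine PsiEquiv.symm' ?_
    have h : psi43 (F (Phi5 x)) = F x := by
      cases x; simp [F, Phi5, psi43]; try (and_intros <;> ring)
    rw [← h]; exact psi_step psi43 (by simp [psiMoves]) _
  · -- Φ₆(a,b,c)  =  ψ₂₁^c ψ₁₂^b ψ₂₃^{-a} ψ₄₃^{-a}
    refine ((((psi43_it (F x) (-a)).trans' (psi23_it _ (-a))).trans'
      (psi12_it _ b)).trans' (psi21_it _ c)).trans' (psiEquiv_of_eq ?_)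
    obtain ⟨k, l, r, d, e1, e2, e3, e4, e5, e6, e7, e8⟩ := x
    simp only at hc
    simp [F, Phi6, psi43It, psi23It, psi12It, psi21It]
    and_intros <;> first | ring1 | linear_combination hc | linear_combination -hc

theorem part_one {T T' : LTuple} (h : PhiEquiv T T') : PsiEquiv (F T) (F T') := by
  induction h with
  | rel a b hab => exact phiStep_psiEquiv hab
  | refl a => exact PsiEquiv.refl' _
  | symm a b _ ih => exact ih.symm'
  | trans a b c _ _ ih1 ih2 => exact ih1.trans' ih2

end PartOne
section NormalForm

/-- Parameters for a normal-form element of the group generated by the ψ-moves. -/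
structure Par : Type where
  a1 : ℤ
  a2 : ℤ
  a3 : ℤ
  a4 : ℤ
  b1 : ℤ
  b2 : ℤ
  b3 : ℤ
  b4 : ℤ
  l1 : ℤ
  l2 : ℤ
  l3 : ℤ
  l4 : ℤ
  l5 : ℤ
  l6 : ℤ

/-- The normal-form action: `ψ₂₁^{a₁} ψ₁₂^{a₂} ψ₄₃^{a₃} ψ₃₄^{a₄} ψ₄₁^{b₁} ψ₃₂^{b₂}
ψ₂₃^{b₃} ψ₁₄^{b₄}` followed by a central translation with coefficients `l₁,…,l₆`. -/
def psiAct (p : Par) (x : Tuple) : Tuple :=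
  ⟨x.c1, x.c2, x.c3, x.c4, x.c5, x.c6,
   x.f1 + p.b2 * x.c6 - p.b3 * x.c5 - p.a4 * x.c1 + p.a3 * x.c5,
   x.f2 + p.b1 * x.c6 - p.b4 * x.c2 + p.a4 * x.c2 - p.a3 * x.c4,
   x.f3 + p.b4 * x.c3 - p.b1 * x.c5 - p.a2 * x.c4 + p.a1 * x.c5,
   x.f4 + p.b3 * x.c3 - p.b2 * x.c2 + p.a2 * x.c2 - p.a1 * x.c1,
   x.t1 + p.a1 * x.f1 + p.a2 * x.f2 + p.a3 * x.f3 + p.a4 * x.f4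
     + (p.a4 * (p.b3 * x.c3 - p.b2 * x.c2) + p.a3 * (p.b4 * x.c3 - p.b1 * x.c5)
        + p.a2 * (p.b1 * x.c6 - p.b4 * x.c2 + p.a4 * x.c2 - p.a3 * x.c4)
        + p.a1 * (p.b2 * x.c6 - p.b3 * x.c5 - p.a4 * x.c1 + p.a3 * x.c5))
     + (p.l1 * x.c6 + p.l4 * x.c3 + p.l5 * x.c5 + p.l6 * x.c2),
   x.t2 - (p.b1 * x.f1 + p.b2 * x.f2 + p.b3 * x.f3 + p.b4 * x.f4)
     - (p.b3 * p.b4 * x.c3 - p.b2 * p.b4 * x.c2 - p.b1 * p.b3 * x.c5 + p.b1 * p.b2 * x.c6)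
     + (p.l2 * x.c1 + p.l3 * x.c4 - p.l5 * x.c5 - p.l6 * x.c2)⟩

/-- Composition of normal-form parameters (`q` applied after `p`). -/
def pcomp (p q : Par) : Par :=
  ⟨p.a1 + q.a1, p.a2 + q.a2, p.a3 + q.a3, p.a4 + q.a4,
   p.b1 + q.b1, p.b2 + q.b2, p.b3 + q.b3, p.b4 + q.b4,
   p.l1 + q.l1 - p.a2 * q.b1 - p.a1 * q.b2,
   p.l2 + q.l2 + p.a4 * q.b1 + p.a1 * q.b4,
   p.l3 + q.l3 + p.a3 * q.b2 + p.a2 * q.b3,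
   p.l4 + q.l4 - p.a4 * q.b3 - p.a3 * q.b4,
   p.l5 + q.l5 + p.a3 * q.b1 + p.a1 * q.b3,
   p.l6 + q.l6 + p.a4 * q.b2 + p.a2 * q.b4⟩

/-- Inverse of normal-form parameters. -/
def pinv (p : Par) : Par :=
  ⟨-p.a1, -p.a2, -p.a3, -p.a4, -p.b1, -p.b2, -p.b3, -p.b4,
   -p.l1 - p.a2 * p.b1 - p.a1 * p.b2,
   -p.l2 + p.a4 * p.b1 + p.a1 * p.b4,
   -p.l3 + p.a3 * p.b2 + p.a2 * p.b3,
   -p.l4 - p.a4 * p.b3 - p.a3 * p.b4,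
   -p.l5 + p.a3 * p.b1 + p.a1 * p.b3,
   -p.l6 + p.a4 * p.b2 + p.a2 * p.b4⟩

theorem psiAct_zero (x : Tuple) : psiAct ⟨0,0,0,0,0,0,0,0,0,0,0,0,0,0⟩ x = x := by
  cases x; simp [psiAct]

theorem psiAct_comp (p q : Par) (x : Tuple) :
    psiAct q (psiAct p x) = psiAct (pcomp p q) x := by
  cases p; cases q; cases x
  simp only [psiAct, pcomp]
  try (and_intros <;> ring)

theorem psiAct_inv (p : Par) (x : Tuple) : psiAct (pinv p) (psiAct p x) = x := by
  cases p; cases x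
  simp only [psiAct, pinv]
  try (and_intros <;> ring)

/-- Every ψ-equivalence is realized by a normal-form element. -/
theorem psiEquiv_normal {x y : Tuple} (h : PsiEquiv x y) : ∃ p : Par, y = psiAct p x := by
  induction h with
  | rel a b hab =>
      obtain ⟨g, hg, rfl⟩ := hab
      simp only [psiMoves, List.mem_cons, List.not_mem_nil, or_false] at hg
      rcases hg with rfl | rfl | rfl | rfl | rfl | rfl | rfl | rfl
      · exact ⟨⟨1,0,0,0,0,0,0,0,0,0,0,0,0,0⟩, by cases a; simp [psi21, psiAct]; try (and_intros <;> ring)⟩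
      · exact ⟨⟨0,0,0,0,1,0,0,0,0,0,0,0,0,0⟩, by cases a; simp [psi41, psiAct]; try (and_intros <;> ring)⟩
      · exact ⟨⟨0,1,0,0,0,0,0,0,0,0,0,0,0,0⟩, by cases a; simp [psi12, psiAct]; try (and_intros <;> ring)⟩
      · exact ⟨⟨0,0,0,0,0,1,0,0,0,0,0,0,0,0⟩, by cases a; simp [psi32, psiAct]; try (and_intros <;> ring)⟩
      · exact ⟨⟨0,0,1,0,0,0,0,0,0,0,0,0,0,0⟩, by cases a; simp [psi43, psiAct]; try (and_intros <;> ring)⟩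
      · exact ⟨⟨0,0,0,0,0,0,1,0,0,0,0,0,0,0⟩, by cases a; simp [psi23, psiAct]; try (and_intros <;> ring)⟩
      · exact ⟨⟨0,0,0,1,0,0,0,0,0,0,0,0,0,0⟩, by cases a; simp [psi34, psiAct]; try (and_intros <;> ring)⟩
      · exact ⟨⟨0,0,0,0,0,0,0,1,0,0,0,0,0,0⟩, by cases a; simp [psi14, psiAct]; try (and_intros <;> ring)⟩
  | refl a => exact ⟨⟨0,0,0,0,0,0,0,0,0,0,0,0,0,0⟩, (psiAct_zero a).symm⟩
  | symm a b _ ih =>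
      obtain ⟨p, rfl⟩ := ih
      exact ⟨pinv p, (psiAct_inv p a).symm⟩
  | trans a b c _ _ ih1 ih2 =>
      obtain ⟨p, rfl⟩ := ih1
      obtain ⟨q, rfl⟩ := ih2
      exact ⟨pcomp p q, psiAct_comp p q a⟩

end NormalForm
section PartTwo

/-- The inverse of `F`. -/
def Ginv (x : Tuple) : LTuple :=
  ⟨-x.c3, -x.c1, -x.c2, x.f4, -x.c4, -x.c5, -x.c6,
   -x.f3, x.f2, -x.f1, -x.t2, x.t1 + x.t2⟩

theorem F_Ginv (x : Tuple) : F (Ginv x) = x := by cases x; simp [F, Ginv]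

theorem Ginv_F (T : LTuple) : Ginv (F T) = T := by cases T; simp [F, Ginv]

/-- Part (ii): every tuple is ψ-equivalent to `F T` for some `T` satisfying the
constraint on `d`. -/
theorem part_two (N : Tuple) : ∃ T : LTuple, DCon T ∧ PsiEquiv N (F T) := by
  obtain ⟨c1, c2, c3, c4, c5, c6, f1, f2, f3, f4, t1, t2⟩ := N
  by_cases h0 : Int.gcd (-c3) (Int.gcd (-c1) (-c2)) = 0
  · refine ⟨Ginv ⟨c1, c2, c3, c4, c5, c6, f1, f2, f3, f4, t1, t2⟩, ?_, ?_⟩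
    · intro hc
      rw [Int.gcd_eq_zero_iff] at h0
      obtain ⟨h3, h12⟩ := h0
      rw [Nat.cast_eq_zero, Int.gcd_eq_zero_iff] at h12
      exact absurd ⟨h3, h12.1, h12.2⟩ hc
    · rw [F_Ginv]; exact PsiEquiv.refl' _
  · set G : ℤ := (Int.gcd (-c3) (Int.gcd (-c1) (-c2)) : ℤ) with hGdef
    have hGpos : 0 < G := by
      rw [hGdef]; exact_mod_cast Nat.pos_of_ne_zero h0
    set m : ℤ := f4 / G with hm
    set A : ℤ := Int.gcdA (-c3) (Int.gcd (-c1) (-c2)) with hA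
    set B : ℤ := Int.gcdB (-c3) (Int.gcd (-c1) (-c2)) with hB
    set A' : ℤ := Int.gcdA (-c1) (-c2) with hA'
    set B' : ℤ := Int.gcdB (-c1) (-c2) with hB'
    have h1 : G = (-c3) * A + (Int.gcd (-c1) (-c2) : ℤ) * B := Int.gcd_eq_gcd_ab _ _
    have h2 : (Int.gcd (-c1) (-c2) : ℤ) = (-c1) * A' + (-c2) * B' := Int.gcd_eq_gcd_ab _ _
    have h3 : f4 % G = f4 - G * m := Int.emod_def _ _
    have key : f4 + -(m * B * A') * -c1 + (m * B * B') * c2 + (m * A) * c3 = f4 % G := by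
      linear_combination m * h1 + m * B * h2 - h3
    refine ⟨Ginv (psi23It (m * A) (psi12It (m * B * B')
      (psi21It (-(m * B * A')) ⟨c1, c2, c3, c4, c5, c6, f1, f2, f3, f4, t1, t2⟩))), ?_, ?_⟩
    · intro _
      simp only [Ginv, psi23It, psi12It, psi21It]
      constructor
      · rw [show f4 - -(m * B * A') * c1 + m * B * B' * c2 + m * A * c3 = f4 % G by
          linear_combination key]
        exact Int.emod_nonneg _ (by omega)
      · rw [show f4 - -(m * B * A') * c1 + m * B * B' * c2 + m * A * c3 = f4 % G by
          linear_combination key]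
        exact Int.emod_lt_of_pos _ hGpos
    · rw [F_Ginv]
      exact ((psi21_it _ (-(m * B * A'))).trans' (psi12_it _ (m * B * B'))).trans'
        (psi23_it _ (m * A))

end PartTwo
section PartThree

/-- The key computation for part (iii): if the normal-form element relating `F T` to
another tuple preserves the `f₄`-coordinate (the balance condition), then the image
tuple comes from an `LTuple` which is Φ-equivalent to `T`. -/
theorem key_three (T : LTuple) (p : Par)
    (hbal : p.a1 * T.l - p.a2 * T.r + p.b2 * T.r - p.b3 * T.k = 0) :
    PhiEquiv T (Ginv (psiAct p (F T))) := by
  have hcond : (-p.b3) * T.k - (p.a2 - p.b2) * T.r + p.a1 * T.l = 0 := by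
    linear_combination hbal
  refine PhiEquiv.trans' (phi6_step T (-p.b3) (p.a2 - p.b2) p.a1 hcond) ?_
  refine PhiEquiv.trans' (phi3_it _ p.b2) ?_
  refine PhiEquiv.trans' (phi5_it _ (p.b3 - p.a3)) ?_
  refine PhiEquiv.trans' (phi2_it _ (-p.a4)) ?_
  refine PhiEquiv.trans' (phi1_it _ (p.b4 - p.a4)) ?_
  refine PhiEquiv.trans' (phi4_it _ (-p.b1)) ?_
  -- W1 with n1 = -(a1 b2 + a2 b1 + l1)
  refine PhiEquiv.trans' (phi3_it _ (-(-(p.a1 * p.b2 + p.a2 * p.b1 + p.l1)))) ?_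
  refine PhiEquiv.trans' (phi4_it _ 1) ?_
  refine PhiEquiv.trans' (phi3_it _ (-(p.a1 * p.b2 + p.a2 * p.b1 + p.l1))) ?_
  refine PhiEquiv.trans' (phi4_it _ (-1)) ?_
  -- W2 with n2 = -(a1 b4) - a4 b1 + l2
  refine PhiEquiv.trans' (phi1_it _ (-(-(p.a1 * p.b4) - p.a4 * p.b1 + p.l2))) ?_
  refine PhiEquiv.trans' (phi2_it _ (-(-(p.a1 * p.b4) - p.a4 * p.b1 + p.l2))) ?_
  refine PhiEquiv.trans' (phi4_it _ (-1)) ?_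
  refine PhiEquiv.trans' (phi1_it _ (-(p.a1 * p.b4) - p.a4 * p.b1 + p.l2)) ?_
  refine PhiEquiv.trans' (phi2_it _ (-(p.a1 * p.b4) - p.a4 * p.b1 + p.l2)) ?_
  refine PhiEquiv.trans' (phi4_it _ 1) ?_
  -- W3 with n3 = -(b2 b3) + l3
  refine PhiEquiv.trans' (phi5_it _ (-(-(p.b2 * p.b3) + p.l3))) ?_
  refine PhiEquiv.trans' (phi3_it _ 1) ?_
  refine PhiEquiv.trans' (phi5_it _ (-(p.b2 * p.b3) + p.l3)) ?_
  refine PhiEquiv.trans' (phi3_it _ (-1)) ?_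
  -- W4 with n4 = -(a3 b4) - l4
  refine PhiEquiv.trans' (phi5_it _ (-(-(p.a3 * p.b4) - p.l4))) ?_
  refine PhiEquiv.trans' (phi1_it _ 1) ?_
  refine PhiEquiv.trans' (phi5_it _ (-(p.a3 * p.b4) - p.l4)) ?_
  refine PhiEquiv.trans' (phi1_it _ (-1)) ?_
  -- W5 with n5 = -(a3 b1) + l5
  refine PhiEquiv.trans' (phi5_it _ (-(-(p.a3 * p.b1) + p.l5))) ?_
  refine PhiEquiv.trans' (phi4_it _ (-1)) ?_
  refine PhiEquiv.trans' (phi5_it _ (-(p.a3 * p.b1) + p.l5)) ?_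
  refine PhiEquiv.trans' (phi4_it _ 1) ?_
  -- W6 with n6 = -(a2 b4) + l6
  refine PhiEquiv.trans' (phi1_it _ (-(-(p.a2 * p.b4) + p.l6))) ?_
  refine PhiEquiv.trans' (phi2_it _ (-(-(p.a2 * p.b4) + p.l6))) ?_
  refine PhiEquiv.trans' (phi3_it _ 1) ?_
  refine PhiEquiv.trans' (phi1_it _ (-(p.a2 * p.b4) + p.l6)) ?_
  refine PhiEquiv.trans' (phi2_it _ (-(p.a2 * p.b4) + p.l6)) ?_
  refine PhiEquiv.trans' (phi3_it _ (-1)) ?_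
  refine phiEquiv_of_eq ?_
  obtain ⟨k, l, r, d, e1, e2, e3, e4, e5, e6, e7, e8⟩ := T
  obtain ⟨a1, a2, a3, a4, b1, b2, b3, b4, l1, l2, l3, l4, l5, l6⟩ := p
  simp only at hbal
  simp only [F, Ginv, psiAct, Phi6, phi1It, phi2It, phi3It, phi4It, phi5It, LTuple.mk.injEq]
  and_intros <;>
    first
      | ring1
      | linear_combination hbal
      | linear_combination -hbal
      | linear_combination b4 * hbal
      | linear_combination -b4 * hbal
      | linear_combination (a4 - b4) * hbal
      | linear_combination (b4 - a4) * hbal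

end PartThree
theorem part_three (T T' : LTuple) (hT : DCon T) (hT' : DCon T')
    (h : PsiEquiv (F T) (F T')) : PhiEquiv T T' := by
  obtain ⟨p, hp⟩ := psiEquiv_normal h
  have heq : T' = Ginv (psiAct p (F T)) := by rw [← hp, Ginv_F]
  have hk : T'.k = T.k := by rw [heq]; cases T; simp [Ginv, psiAct, F]
  have hl : T'.l = T.l := by rw [heq]; cases T; simp [Ginv, psiAct, F]
  have hr : T'.r = T.r := by rw [heq]; cases T; simp [Ginv, psiAct, F]
  have hd : T'.d = T.d + (p.a1 * T.l - p.a2 * T.r + p.b2 * T.r - p.b3 * T.k) := by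
    rw [heq]; cases T; simp [Ginv, psiAct, F]; ring
  have hbal : p.a1 * T.l - p.a2 * T.r + p.b2 * T.r - p.b3 * T.k = 0 := by
    by_cases hz : T.k = 0 ∧ T.l = 0 ∧ T.r = 0
    · rw [hz.1, hz.2.1, hz.2.2]; ring
    · have hb1 := hT hz
      have hz' : ¬(T'.k = 0 ∧ T'.l = 0 ∧ T'.r = 0) := by rw [hk, hl, hr]; exact hz
      have hb2 := hT' hz'
      rw [hk, hl, hr] at hb2
      have hdk : (Int.gcd T.k (Int.gcd T.l T.r) : ℤ) ∣ T.k := Int.gcd_dvd_left _ _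
      have hdlr : (Int.gcd T.k (Int.gcd T.l T.r) : ℤ) ∣ (Int.gcd T.l T.r : ℤ) :=
        Int.gcd_dvd_right _ _
      have hdl : (Int.gcd T.k (Int.gcd T.l T.r) : ℤ) ∣ T.l :=
        dvd_trans hdlr (Int.gcd_dvd_left _ _)
      have hdr : (Int.gcd T.k (Int.gcd T.l T.r) : ℤ) ∣ T.r :=
        dvd_trans hdlr (Int.gcd_dvd_right _ _)
      have hdvd : (Int.gcd T.k (Int.gcd T.l T.r) : ℤ) ∣
          (p.a1 * T.l - p.a2 * T.r + p.b2 * T.r - p.b3 * T.k) :=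
        dvd_sub (dvd_add (dvd_sub (hdl.mul_left _) (hdr.mul_left _)) (hdr.mul_left _))
          (hdk.mul_left _)
      refine Int.eq_zero_of_abs_lt_dvd hdvd ?_
      rw [abs_lt]
      constructor <;> linarith [hb1.1, hb1.2, hb2.1, hb2.2]
  have hkey := key_three T p hbal
  rw [← heq] at hkey
  exact hkey
/-- F induces a well-defined bijection from M (Levine tuples with the constraint on d,
modulo Φ-equivalence) onto N (ℤ¹² modulo ψ-equivalence):
(i) Φ-equivalent tuples have ψ-equivalent images;
(ii) every tuple is ψ-equivalent to F(T) for some T satisfying the constraint;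
(iii) tuples satisfying the constraint whose images are ψ-equivalent are Φ-equivalent. -/
theorem F_induces_bijection :
    (∀ T T' : LTuple, PhiEquiv T T' → PsiEquiv (F T) (F T')) ∧
    (∀ N : Tuple, ∃ T : LTuple, DCon T ∧ PsiEquiv N (F T)) ∧
    (∀ T T' : LTuple, DCon T → DCon T' → PsiEquiv (F T) (F T') → PhiEquiv T T') := by
  exact ⟨fun T T' h => part_one h, part_two, part_three⟩
end

section
/- Let T = (k,l,r,d,e₁,…,e₈) ∈ ℤ¹² and let a, b, c be integers with ak − br + cl = 0. Then F(Φ₆(a,b,c)(T)) = (ψ₂₁ᶜ ∘ ψ₁₂ᵇ ∘ ((ψ₂₃∘ψ₄₃)⁻¹)ᵃ)(F(T)), where powers with negative exponents denote powers of the inverse map. In particular, F(Φ₆(a,b,c)(T)) is ψ-equivalent to F(T). -/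
lemma psi21_zpow (n : ℤ) (x : Tuple) :
    (psi21 ^ n) x =
      { x with f3 := x.f3 + n * x.c5, f4 := x.f4 - n * x.c1, t1 := x.t1 + n * x.f1 } := by
  induction n using Int.induction_on with
  | zero => cases x; simp
  | succ n ih =>
      rw [show ((n : ℤ) + 1) = 1 + n by ring, zpow_add, zpow_one, Equiv.Perm.mul_apply, ih]
      cases x
      simp only [psi21, Equiv.coe_fn_mk, Tuple.mk.injEq]
      and_intros <;> push_cast <;> ring
  | pred n ih =>
      rw [show (-(n : ℤ) - 1) = -1 + -n by ring, zpow_add, zpow_neg_one,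
        Equiv.Perm.mul_apply, ih, Equiv.Perm.inv_def]
      cases x
      simp only [psi21, Equiv.coe_fn_symm_mk, Tuple.mk.injEq]
      and_intros <;> push_cast <;> ring

lemma psi12_zpow (n : ℤ) (x : Tuple) :
    (psi12 ^ n) x =
      { x with f3 := x.f3 - n * x.c4, f4 := x.f4 + n * x.c2, t1 := x.t1 + n * x.f2 } := by
  induction n using Int.induction_on with
  | zero => cases x; simp
  | succ n ih =>
      rw [show ((n : ℤ) + 1) = 1 + n by ring, zpow_add, zpow_one, Equiv.Perm.mul_apply, ih]
      cases x
      simp only [psi12, Equiv.coe_fn_mk, Tuple.mk.injEq]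
      and_intros <;> push_cast <;> ring
  | pred n ih =>
      rw [show (-(n : ℤ) - 1) = -1 + -n by ring, zpow_add, zpow_neg_one,
        Equiv.Perm.mul_apply, ih, Equiv.Perm.inv_def]
      cases x
      simp only [psi12, Equiv.coe_fn_symm_mk, Tuple.mk.injEq]
      and_intros <;> push_cast <;> ring

lemma gi_apply (x : Tuple) :
    ((psi23 * psi43)⁻¹) x =
      { x with
        f2 := x.f2 + x.c4
        f4 := x.f4 - x.c3
        t1 := x.t1 - x.f3
        t2 := x.t2 + x.f3 } := by
  rw [Equiv.Perm.inv_def, Equiv.symm_apply_eq]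
  cases x
  simp only [psi23, psi43, Equiv.Perm.mul_apply, Equiv.coe_fn_mk, Tuple.mk.injEq]
  and_intros <;> push_cast <;> ring

lemma gi_zpow (n : ℤ) (x : Tuple) :
    ((psi23 * psi43)⁻¹ ^ n) x =
      { x with
        f2 := x.f2 + n * x.c4
        f4 := x.f4 - n * x.c3
        t1 := x.t1 - n * x.f3
        t2 := x.t2 + n * x.f3 } := by
  induction n using Int.induction_on with
  | zero => cases x; simp
  | succ n ih =>
      rw [show ((n : ℤ) + 1) = 1 + n by ring, zpow_add, zpow_one, Equiv.Perm.mul_apply, ih,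
        gi_apply]
      cases x
      simp only [Tuple.mk.injEq]
      and_intros <;> push_cast <;> ring
  | pred n ih =>
      rw [show (-(n : ℤ) - 1) = -1 + -n by ring, zpow_add, zpow_neg_one, inv_inv,
        Equiv.Perm.mul_apply, ih]
      cases x
      simp only [psi23, psi43, Equiv.Perm.mul_apply, Equiv.coe_fn_mk, Tuple.mk.injEq]
      and_intros <;> push_cast <;> ring

/-- A permutation all of whose applications are ψ-equivalences. -/
def Good (g : Equiv.Perm Tuple) : Prop := ∀ x, PsiEquiv (g x) x

lemma Good.of_mem {g : Equiv.Perm Tuple} (hg : g ∈ psiMoves) : Good g := fun x =>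
  Relation.EqvGen.symm _ _ (Relation.EqvGen.rel _ _ ⟨g, hg, rfl⟩)

lemma Good.mul {g h : Equiv.Perm Tuple} (hg : Good g) (hh : Good h) : Good (g * h) := fun x =>
  Relation.EqvGen.trans _ _ _ (hg (h x)) (hh x)

lemma Good.inv {g : Equiv.Perm Tuple} (hg : Good g) : Good g⁻¹ := fun x => by
  have := hg (g⁻¹ x)
  rw [Equiv.Perm.coe_inv, Equiv.apply_symm_apply] at this
  exact Relation.EqvGen.symm _ _ this

lemma Good.one : Good 1 := fun _ => Relation.EqvGen.refl _

lemma Good.zpow {g : Equiv.Perm Tuple} (hg : Good g) (n : ℤ) : Good (g ^ n) := by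
  induction n using Int.induction_on with
  | zero => rw [zpow_zero]; exact Good.one
  | succ n ih => rw [show ((n : ℤ) + 1) = 1 + n by ring, zpow_add, zpow_one]; exact hg.mul ih
  | pred n ih =>
      rw [show (-(n : ℤ) - 1) = -1 + -n by ring, zpow_add, zpow_neg_one]
      exact hg.inv.mul ih

/-- For integers a, b, c with ak − br + cl = 0 one has
F(Φ₆(a,b,c)(T)) = (ψ₂₁ᶜ ∘ ψ₁₂ᵇ ∘ ((ψ₂₃∘ψ₄₃)⁻¹)ᵃ)(F(T)); in particular
F(Φ₆(a,b,c)(T)) is ψ-equivalent to F(T). -/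
theorem F_phi6_psi (T : LTuple) (a b c : ℤ)
    (h : a * T.k - b * T.r + c * T.l = 0) :
    F (Phi6 a b c T) = ((psi21 ^ c) * (psi12 ^ b) * ((psi23 * psi43)⁻¹ ^ a)) (F T) ∧
    PsiEquiv (F (Phi6 a b c T)) (F T) := by
  have heq : F (Phi6 a b c T) =
      ((psi21 ^ c) * (psi12 ^ b) * ((psi23 * psi43)⁻¹ ^ a)) (F T) := by
    simp only [Equiv.Perm.mul_apply, gi_zpow, psi12_zpow, psi21_zpow, F, Phi6]
    cases T
    simp only [Tuple.mk.injEq] at h ⊢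
    and_intros <;> (try ring) <;> (try trivial) <;> linarith
  refine ⟨heq, ?_⟩
  rw [heq]
  have hG : Good ((psi21 ^ c) * (psi12 ^ b) * ((psi23 * psi43)⁻¹ ^ a)) := by
    have h21 : Good psi21 := Good.of_mem (by simp [psiMoves])
    have h12 : Good psi12 := Good.of_mem (by simp [psiMoves])
    have h23 : Good psi23 := Good.of_mem (by simp [psiMoves])
    have h43 : Good psi43 := Good.of_mem (by simp [psiMoves])
    exact ((h21.zpow c).mul (h12.zpow b)).mul (((h23.mul h43).inv).zpow a)
  exact hG (F T)
end

section
/- For every tuple (c₁,…,c₆,f₁,…,f₄,t₁,t₂) ∈ ℤ¹², the following commutators of ψ-moves fix the coordinates c₁,…,c₆ and f₁,…,f₄ and change (t₁,t₂) by adding the indicated vector: [ψ₁₄,ψ₂₁] adds (0,c₁); [ψ₁₄,ψ₁₂] adds (c₂,−c₂); [ψ₄₃,ψ₁₄] adds (c₃,0); [ψ₃₂,ψ₄₃] adds (0,c₄); [ψ₂₁,ψ₂₃] adds (−c₅,c₅); [ψ₁₂,ψ₄₁] adds (c₆,0). -/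
open scoped commutatorElement

/-- The commutators of ψ-moves fix c₁,…,c₆ and f₁,…,f₄ and translate (t₁,t₂):
[ψ₁₄,ψ₂₁] adds (0,c₁); [ψ₁₄,ψ₁₂] adds (c₂,−c₂); [ψ₄₃,ψ₁₄] adds (c₃,0);
[ψ₃₂,ψ₄₃] adds (0,c₄); [ψ₂₁,ψ₂₃] adds (−c₅,c₅); [ψ₁₂,ψ₄₁] adds (c₆,0). -/
theorem psi_commutators (T : Tuple) :
    ⁅psi14, psi21⁆ T = { T with t2 := T.t2 + T.c1 } ∧
    ⁅psi14, psi12⁆ T = { T with t1 := T.t1 + T.c2, t2 := T.t2 - T.c2 } ∧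
    ⁅psi43, psi14⁆ T = { T with t1 := T.t1 + T.c3 } ∧
    ⁅psi32, psi43⁆ T = { T with t2 := T.t2 + T.c4 } ∧
    ⁅psi21, psi23⁆ T = { T with t1 := T.t1 - T.c5, t2 := T.t2 + T.c5 } ∧
    ⁅psi12, psi41⁆ T = { T with t1 := T.t1 + T.c6 } := by
  cases T
  refine ⟨?_, ?_, ?_, ?_, ?_, ?_⟩ <;>
    simp [commutatorElement_def, Equiv.Perm.mul_apply, psi14, psi21, psi12, psi43,
      psi32, psi23, psi41, Equiv.Perm.inv_def] <;> ring_nf <;> simp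
end

section
/- Let T = (c₁,0,c₃,0,0,0,f₁,f₂,f₃,f₄,t₁,t₂) and T′ = (c₁,0,c₃,0,0,0,f₁′,f₂′,f₃′,f₄′,t₁′,t₂′) be tuples in ℤ¹² with the same values c₁ ≠ 0 and c₃ ≠ 0, and suppose c₁ ∣ f₁, c₁ ∣ f₁′, c₃ ∣ f₃ and c₃ ∣ f₃′. Then T and T′ are ψ-equivalent if and only if: f₂ = f₂′; f₄ ≡ f₄′ (mod gcd(c₁,c₃)); c₁t₁ + f₁f₄ ≡ c₁t₁′ + f₁′f₄′ (mod c₁·gcd(c₃,f₂)); and c₃t₂ + f₃f₄ ≡ c₃t₂′ + f₃′f₄′ (mod c₃·gcd(c₁,f₂)). -/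
namespace PsiAux

theorem step {g : Equiv.Perm Tuple} (hg : g ∈ psiMoves) (x : Tuple) :
    PsiEquiv x (g x) := Relation.EqvGen.rel _ _ ⟨g, hg, rfl⟩

theorem PsiEquiv.refl (x : Tuple) : PsiEquiv x x := Relation.EqvGen.refl x
theorem PsiEquiv.symm {x y : Tuple} (h : PsiEquiv x y) : PsiEquiv y x := Relation.EqvGen.symm _ _ h
theorem PsiEquiv.trans {x y z : Tuple} (h : PsiEquiv x y) (h' : PsiEquiv y z) : PsiEquiv x z :=
  Relation.EqvGen.trans _ _ _ h h'

/-- iterate a parametric single step -/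
theorem iter {Q : ℤ → Tuple} (h : ∀ j : ℤ, PsiEquiv (Q j) (Q (j + 1))) :
    ∀ k : ℤ, PsiEquiv (Q 0) (Q k) := by
  intro k
  induction k using Int.induction_on with
  | zero => exact PsiEquiv.refl _
  | succ n ih => exact PsiEquiv.trans ih (h n)
  | pred n ih =>
      refine PsiEquiv.trans ih (PsiEquiv.symm ?_)
      have := h (-n - 1)
      simpa using this

def mk' (c1 c3 f1 f2 f3 f4 t1 t2 : ℤ) : Tuple := ⟨c1, 0, c3, 0, 0, 0, f1, f2, f3, f4, t1, t2⟩

-- test evaluation of moves on mk'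
example (c1 c3 f1 f2 f3 f4 t1 t2 : ℤ) :
    psi21 (mk' c1 c3 f1 f2 f3 f4 t1 t2) = mk' c1 c3 f1 f2 f3 (f4 - c1) (t1 + f1) t2 := by
  simp [psi21, mk']

end PsiAux
namespace PsiAux

theorem peq_congr {x y y' : Tuple} (h : PsiEquiv x y) (e : y = y') : PsiEquiv x y' := e ▸ h

variable (c1 c3 : ℤ)

theorem mvA (f1 f2 f3 f4 t1 t2 : ℤ) :
    PsiEquiv (mk' c1 c3 f1 f2 f3 f4 t1 t2) (mk' c1 c3 f1 f2 f3 (f4 - c1) (t1 + f1) t2) := by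
  simpa [psi21, mk'] using step (g := psi21) (by simp [psiMoves]) (mk' c1 c3 f1 f2 f3 f4 t1 t2)

theorem mvB (f1 f2 f3 f4 t1 t2 : ℤ) :
    PsiEquiv (mk' c1 c3 f1 f2 f3 f4 t1 t2) (mk' c1 c3 f1 f2 f3 f4 t1 (t2 - f1)) := by
  simpa [psi41, mk'] using step (g := psi41) (by simp [psiMoves]) (mk' c1 c3 f1 f2 f3 f4 t1 t2)

theorem mvC (f1 f2 f3 f4 t1 t2 : ℤ) :
    PsiEquiv (mk' c1 c3 f1 f2 f3 f4 t1 t2) (mk' c1 c3 f1 f2 f3 f4 (t1 + f2) t2) := by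
  simpa [psi12, mk'] using step (g := psi12) (by simp [psiMoves]) (mk' c1 c3 f1 f2 f3 f4 t1 t2)

theorem mvD (f1 f2 f3 f4 t1 t2 : ℤ) :
    PsiEquiv (mk' c1 c3 f1 f2 f3 f4 t1 t2) (mk' c1 c3 f1 f2 f3 f4 t1 (t2 - f2)) := by
  simpa [psi32, mk'] using step (g := psi32) (by simp [psiMoves]) (mk' c1 c3 f1 f2 f3 f4 t1 t2)

theorem mvE (f1 f2 f3 f4 t1 t2 : ℤ) :
    PsiEquiv (mk' c1 c3 f1 f2 f3 f4 t1 t2) (mk' c1 c3 f1 f2 f3 f4 (t1 + f3) t2) := by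
  simpa [psi43, mk'] using step (g := psi43) (by simp [psiMoves]) (mk' c1 c3 f1 f2 f3 f4 t1 t2)

theorem mvF (f1 f2 f3 f4 t1 t2 : ℤ) :
    PsiEquiv (mk' c1 c3 f1 f2 f3 f4 t1 t2) (mk' c1 c3 f1 f2 f3 (f4 + c3) t1 (t2 - f3)) := by
  simpa [psi23, mk'] using step (g := psi23) (by simp [psiMoves]) (mk' c1 c3 f1 f2 f3 f4 t1 t2)

theorem mvG (f1 f2 f3 f4 t1 t2 : ℤ) :
    PsiEquiv (mk' c1 c3 f1 f2 f3 f4 t1 t2) (mk' c1 c3 (f1 - c1) f2 f3 f4 (t1 + f4) t2) := by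
  simpa [psi34, mk'] using step (g := psi34) (by simp [psiMoves]) (mk' c1 c3 f1 f2 f3 f4 t1 t2)

theorem mvH (f1 f2 f3 f4 t1 t2 : ℤ) :
    PsiEquiv (mk' c1 c3 f1 f2 f3 f4 t1 t2) (mk' c1 c3 f1 f2 (f3 + c3) f4 t1 (t2 - f4)) := by
  simpa [psi14, mk'] using step (g := psi14) (by simp [psiMoves]) (mk' c1 c3 f1 f2 f3 f4 t1 t2)

/-- reduce f1 from c1*k to 0, t1 gains k*f4. -/
theorem R1 (f2 f3 f4 t1 t2 k : ℤ) :
    PsiEquiv (mk' c1 c3 (c1 * k) f2 f3 f4 t1 t2) (mk' c1 c3 0 f2 f3 f4 (t1 + k * f4) t2) := by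
  have h : ∀ j : ℤ, PsiEquiv (mk' c1 c3 (c1 * (k - j)) f2 f3 f4 (t1 + j * f4) t2)
      (mk' c1 c3 (c1 * (k - (j + 1))) f2 f3 f4 (t1 + (j + 1) * f4) t2) := by
    intro j
    exact peq_congr (mvG c1 c3 (c1 * (k - j)) f2 f3 f4 (t1 + j * f4) t2)
      (by unfold mk'; ring_nf)
  have := iter (Q := fun j => mk' c1 c3 (c1 * (k - j)) f2 f3 f4 (t1 + j * f4) t2) h k
  simpa using this

/-- reduce f3 from c3*k to 0, t2 gains k*f4. -/
theorem R2 (f1 f2 f4 t1 t2 k : ℤ) :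
    PsiEquiv (mk' c1 c3 f1 f2 (c3 * k) f4 t1 t2) (mk' c1 c3 f1 f2 0 f4 t1 (t2 + k * f4)) := by
  have h : ∀ j : ℤ, PsiEquiv (mk' c1 c3 f1 f2 (c3 * (k - j)) f4 t1 (t2 + j * f4))
      (mk' c1 c3 f1 f2 (c3 * (k - (j + 1))) f4 t1 (t2 + (j + 1) * f4)) := by
    intro j
    refine PsiEquiv.symm (peq_congr
      (mvH c1 c3 f1 f2 (c3 * (k - (j + 1))) f4 t1 (t2 + (j + 1) * f4)) ?_)
    unfold mk'; ring_nf
  have := iter (Q := fun j => mk' c1 c3 f1 f2 (c3 * (k - j)) f4 t1 (t2 + j * f4)) h k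
  simpa using this

/-- with f1 = 0, shift f4 by k*c1. -/
theorem L1 (f2 f3 f4 t1 t2 k : ℤ) :
    PsiEquiv (mk' c1 c3 0 f2 f3 f4 t1 t2) (mk' c1 c3 0 f2 f3 (f4 + k * c1) t1 t2) := by
  have h : ∀ j : ℤ, PsiEquiv (mk' c1 c3 0 f2 f3 (f4 + j * c1) t1 t2)
      (mk' c1 c3 0 f2 f3 (f4 + (j + 1) * c1) t1 t2) := by
    intro j
    refine PsiEquiv.symm (peq_congr (mvA c1 c3 0 f2 f3 (f4 + (j + 1) * c1) t1 t2) ?_)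
    unfold mk'; ring_nf
  have := iter (Q := fun j => mk' c1 c3 0 f2 f3 (f4 + j * c1) t1 t2) h k
  simpa using this

/-- with f3 = 0, shift f4 by k*c3. -/
theorem L2 (f1 f2 f4 t1 t2 k : ℤ) :
    PsiEquiv (mk' c1 c3 f1 f2 0 f4 t1 t2) (mk' c1 c3 f1 f2 0 (f4 + k * c3) t1 t2) := by
  have h : ∀ j : ℤ, PsiEquiv (mk' c1 c3 f1 f2 0 (f4 + j * c3) t1 t2)
      (mk' c1 c3 f1 f2 0 (f4 + (j + 1) * c3) t1 t2) := by
    intro j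
    exact peq_congr (mvF c1 c3 f1 f2 0 (f4 + j * c3) t1 t2) (by unfold mk'; ring_nf)
  have := iter (Q := fun j => mk' c1 c3 f1 f2 0 (f4 + j * c3) t1 t2) h k
  simpa using this

/-- shift t1 by k*f2. -/
theorem L3 (f1 f2 f3 f4 t1 t2 k : ℤ) :
    PsiEquiv (mk' c1 c3 f1 f2 f3 f4 t1 t2) (mk' c1 c3 f1 f2 f3 f4 (t1 + k * f2) t2) := by
  have h : ∀ j : ℤ, PsiEquiv (mk' c1 c3 f1 f2 f3 f4 (t1 + j * f2) t2)
      (mk' c1 c3 f1 f2 f3 f4 (t1 + (j + 1) * f2) t2) := by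
    intro j
    exact peq_congr (mvC c1 c3 f1 f2 f3 f4 (t1 + j * f2) t2) (by unfold mk'; ring_nf)
  have := iter (Q := fun j => mk' c1 c3 f1 f2 f3 f4 (t1 + j * f2) t2) h k
  simpa using this

/-- shift t2 by k*f2. -/
theorem L5 (f1 f2 f3 f4 t1 t2 k : ℤ) :
    PsiEquiv (mk' c1 c3 f1 f2 f3 f4 t1 t2) (mk' c1 c3 f1 f2 f3 f4 t1 (t2 + k * f2)) := by
  have h : ∀ j : ℤ, PsiEquiv (mk' c1 c3 f1 f2 f3 f4 t1 (t2 + j * f2))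
      (mk' c1 c3 f1 f2 f3 f4 t1 (t2 + (j + 1) * f2)) := by
    intro j
    refine PsiEquiv.symm (peq_congr (mvD c1 c3 f1 f2 f3 f4 t1 (t2 + (j + 1) * f2)) ?_)
    unfold mk'; ring_nf
  have := iter (Q := fun j => mk' c1 c3 f1 f2 f3 f4 t1 (t2 + j * f2)) h k
  simpa using this

/-- with f3 = 0, shift t1 by c3 (composite H, E, H⁻¹). -/
theorem L4one (f1 f2 f4 t1 t2 : ℤ) :
    PsiEquiv (mk' c1 c3 f1 f2 0 f4 t1 t2) (mk' c1 c3 f1 f2 0 f4 (t1 + c3) t2) := by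
  have s1 : PsiEquiv (mk' c1 c3 f1 f2 0 f4 t1 t2) (mk' c1 c3 f1 f2 c3 f4 t1 (t2 - f4)) :=
    peq_congr (mvH c1 c3 f1 f2 0 f4 t1 t2) (by unfold mk'; ring_nf)
  have s2 := mvE c1 c3 f1 f2 c3 f4 t1 (t2 - f4)
  have s3 : PsiEquiv (mk' c1 c3 f1 f2 0 f4 (t1 + c3) t2)
      (mk' c1 c3 f1 f2 c3 f4 (t1 + c3) (t2 - f4)) :=
    peq_congr (mvH c1 c3 f1 f2 0 f4 (t1 + c3) t2) (by unfold mk'; ring_nf)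
  have s3 := PsiEquiv.symm s3
  exact PsiEquiv.trans (PsiEquiv.trans s1 s2) s3

/-- with f3 = 0, shift t1 by k*c3. -/
theorem L4 (f1 f2 f4 t1 t2 k : ℤ) :
    PsiEquiv (mk' c1 c3 f1 f2 0 f4 t1 t2) (mk' c1 c3 f1 f2 0 f4 (t1 + k * c3) t2) := by
  have h : ∀ j : ℤ, PsiEquiv (mk' c1 c3 f1 f2 0 f4 (t1 + j * c3) t2)
      (mk' c1 c3 f1 f2 0 f4 (t1 + (j + 1) * c3) t2) := by
    intro j
    exact peq_congr (L4one c1 c3 f1 f2 f4 (t1 + j * c3) t2) (by unfold mk'; ring_nf)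
  have := iter (Q := fun j => mk' c1 c3 f1 f2 0 f4 (t1 + j * c3) t2) h k
  simpa using this

/-- with f1 = 0, shift t2 by c1 (composite G, B, G⁻¹). -/
theorem L6one (f2 f3 f4 t1 t2 : ℤ) :
    PsiEquiv (mk' c1 c3 0 f2 f3 f4 t1 t2) (mk' c1 c3 0 f2 f3 f4 t1 (t2 + c1)) := by
  have s1 : PsiEquiv (mk' c1 c3 0 f2 f3 f4 t1 t2) (mk' c1 c3 (-c1) f2 f3 f4 (t1 + f4) t2) :=
    peq_congr (mvG c1 c3 0 f2 f3 f4 t1 t2) (by unfold mk'; ring_nf)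
  have s2 : PsiEquiv (mk' c1 c3 (-c1) f2 f3 f4 (t1 + f4) t2)
      (mk' c1 c3 (-c1) f2 f3 f4 (t1 + f4) (t2 + c1)) :=
    peq_congr (mvB c1 c3 (-c1) f2 f3 f4 (t1 + f4) t2) (by unfold mk'; ring_nf)
  have s3 : PsiEquiv (mk' c1 c3 0 f2 f3 f4 t1 (t2 + c1))
      (mk' c1 c3 (-c1) f2 f3 f4 (t1 + f4) (t2 + c1)) :=
    peq_congr (mvG c1 c3 0 f2 f3 f4 t1 (t2 + c1)) (by unfold mk'; ring_nf)
  have s3 := PsiEquiv.symm s3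
  exact PsiEquiv.trans (PsiEquiv.trans s1 s2) s3

/-- with f1 = 0, shift t2 by k*c1. -/
theorem L6 (f2 f3 f4 t1 t2 k : ℤ) :
    PsiEquiv (mk' c1 c3 0 f2 f3 f4 t1 t2) (mk' c1 c3 0 f2 f3 f4 t1 (t2 + k * c1)) := by
  have h : ∀ j : ℤ, PsiEquiv (mk' c1 c3 0 f2 f3 f4 t1 (t2 + j * c1))
      (mk' c1 c3 0 f2 f3 f4 t1 (t2 + (j + 1) * c1)) := by
    intro j
    exact peq_congr (L6one c1 c3 f2 f3 f4 t1 (t2 + j * c1)) (by unfold mk'; ring_nf)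
  have := iter (Q := fun j => mk' c1 c3 0 f2 f3 f4 t1 (t2 + j * c1)) h k
  simpa using this

end PsiAux
namespace PsiAux

variable (c1 c3 : ℤ)

theorem adj_f4 (f2 f4 t1 t2 d : ℤ) (h : (Int.gcd c1 c3 : ℤ) ∣ d) :
    PsiEquiv (mk' c1 c3 0 f2 0 f4 t1 t2) (mk' c1 c3 0 f2 0 (f4 + d) t1 t2) := by
  obtain ⟨m, rfl⟩ := h
  have h1 := L1 c1 c3 f2 0 f4 t1 t2 (Int.gcdA c1 c3 * m)
  have h2 := L2 c1 c3 0 f2 (f4 + Int.gcdA c1 c3 * m * c1) t1 t2 (Int.gcdB c1 c3 * m)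
  refine peq_congr (PsiEquiv.trans h1 h2) ?_
  unfold mk'
  have : f4 + Int.gcdA c1 c3 * m * c1 + Int.gcdB c1 c3 * m * c3
      = f4 + (Int.gcd c1 c3 : ℤ) * m := by
    rw [Int.gcd_eq_gcd_ab c1 c3]; ring
  rw [this]

theorem adj_t1 (f2 f4 t1 t2 d : ℤ) (h : (Int.gcd c3 f2 : ℤ) ∣ d) :
    PsiEquiv (mk' c1 c3 0 f2 0 f4 t1 t2) (mk' c1 c3 0 f2 0 f4 (t1 + d) t2) := by
  obtain ⟨m, rfl⟩ := h
  have h1 := L4 c1 c3 0 f2 f4 t1 t2 (Int.gcdA c3 f2 * m)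
  have h2 := L3 c1 c3 0 f2 0 f4 (t1 + Int.gcdA c3 f2 * m * c3) t2 (Int.gcdB c3 f2 * m)
  refine peq_congr (PsiEquiv.trans h1 h2) ?_
  unfold mk'
  have : t1 + Int.gcdA c3 f2 * m * c3 + Int.gcdB c3 f2 * m * f2
      = t1 + (Int.gcd c3 f2 : ℤ) * m := by
    rw [Int.gcd_eq_gcd_ab c3 f2]; ring
  rw [this]

theorem adj_t2 (f2 f4 t1 t2 d : ℤ) (h : (Int.gcd c1 f2 : ℤ) ∣ d) :
    PsiEquiv (mk' c1 c3 0 f2 0 f4 t1 t2) (mk' c1 c3 0 f2 0 f4 t1 (t2 + d)) := by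
  obtain ⟨m, rfl⟩ := h
  have h1 := L6 c1 c3 f2 0 f4 t1 t2 (Int.gcdA c1 f2 * m)
  have h2 := L5 c1 c3 0 f2 0 f4 t1 (t2 + Int.gcdA c1 f2 * m * c1) (Int.gcdB c1 f2 * m)
  refine peq_congr (PsiEquiv.trans h1 h2) ?_
  unfold mk'
  have : t2 + Int.gcdA c1 f2 * m * c1 + Int.gcdB c1 f2 * m * f2
      = t2 + (Int.gcd c1 f2 : ℤ) * m := by
    rw [Int.gcd_eq_gcd_ab c1 f2]; ring
  rw [this]

theorem reduce (f2 f4 t1 t2 k1 k3 : ℤ) :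
    PsiEquiv (mk' c1 c3 (c1 * k1) f2 (c3 * k3) f4 t1 t2)
      (mk' c1 c3 0 f2 0 f4 (t1 + k1 * f4) (t2 + k3 * f4)) :=
  PsiEquiv.trans (R1 c1 c3 f2 (c3 * k3) f4 t1 t2 k1)
    (R2 c1 c3 0 f2 f4 (t1 + k1 * f4) t2 k3)

theorem backward (f2 f4 t1 t2 f4' t1' t2' k1 k3 k1' k3' : ℤ) (hc1 : c1 ≠ 0) (hc3 : c3 ≠ 0)
    (hf4 : (Int.gcd c1 c3 : ℤ) ∣ f4 - f4')
    (hI1 : c1 * (Int.gcd c3 f2 : ℤ) ∣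
      (c1 * t1 + (c1 * k1) * f4) - (c1 * t1' + (c1 * k1') * f4'))
    (hI2 : c3 * (Int.gcd c1 f2 : ℤ) ∣
      (c3 * t2 + (c3 * k3) * f4) - (c3 * t2' + (c3 * k3') * f4')) :
    PsiEquiv (mk' c1 c3 (c1 * k1) f2 (c3 * k3) f4 t1 t2)
      (mk' c1 c3 (c1 * k1') f2 (c3 * k3') f4' t1' t2') := by
  set τ1 := t1 + k1 * f4 with hτ1
  set τ2 := t2 + k3 * f4 with hτ2
  set τ1' := t1' + k1' * f4' with hτ1'
  set τ2' := t2' + k3' * f4' with hτ2'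
  have step1 := reduce c1 c3 f2 f4 t1 t2 k1 k3
  have step5 := PsiEquiv.symm (reduce c1 c3 f2 f4' t1' t2' k1' k3')
  have step2 : PsiEquiv (mk' c1 c3 0 f2 0 f4 τ1 τ2) (mk' c1 c3 0 f2 0 f4' τ1 τ2) := by
    have := adj_f4 c1 c3 f2 f4 τ1 τ2 (f4' - f4) (by
      have := (dvd_neg).2 hf4; simpa [neg_sub] using this)
    refine peq_congr this ?_
    unfold mk'; ring_nf
  have hd1 : (Int.gcd c3 f2 : ℤ) ∣ τ1' - τ1 := by
    have key : c1 * ((Int.gcd c3 f2 : ℤ)) ∣ c1 * (τ1' - τ1) := by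
      have : (c1 * t1' + (c1 * k1') * f4') - (c1 * t1 + (c1 * k1) * f4) = c1 * (τ1' - τ1) := by
        rw [hτ1, hτ1']; ring
    
      rw [← this]
      have := (dvd_neg).2 hI1; simpa [neg_sub] using this
    exact (mul_dvd_mul_iff_left hc1).1 key
  have hd2 : (Int.gcd c1 f2 : ℤ) ∣ τ2' - τ2 := by
    have key : c3 * ((Int.gcd c1 f2 : ℤ)) ∣ c3 * (τ2' - τ2) := by
      have : (c3 * t2' + (c3 * k3') * f4') - (c3 * t2 + (c3 * k3) * f4) = c3 * (τ2' - τ2) := by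
        rw [hτ2, hτ2']; ring
      rw [← this]
      have := (dvd_neg).2 hI2; simpa [neg_sub] using this
    exact (mul_dvd_mul_iff_left hc3).1 key
  have step3 : PsiEquiv (mk' c1 c3 0 f2 0 f4' τ1 τ2) (mk' c1 c3 0 f2 0 f4' τ1' τ2) := by
    refine peq_congr (adj_t1 c1 c3 f2 f4' τ1 τ2 (τ1' - τ1) hd1) ?_
    unfold mk'; ring_nf
  have step4 : PsiEquiv (mk' c1 c3 0 f2 0 f4' τ1' τ2) (mk' c1 c3 0 f2 0 f4' τ1' τ2') := by
    refine peq_congr (adj_t2 c1 c3 f2 f4' τ1' τ2 (τ2' - τ2) hd2) ?_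
    unfold mk'; ring_nf
  exact PsiEquiv.trans step1 (PsiEquiv.trans step2
    (PsiEquiv.trans step3 (PsiEquiv.trans step4 step5)))

end PsiAux
namespace PsiAux

def Good (x : Tuple) : Prop := x.c2 = 0 ∧ x.c4 = 0 ∧ x.c5 = 0 ∧ x.c6 = 0

def Rrel (x y : Tuple) : Prop :=
  x.c1 = y.c1 ∧ x.c2 = y.c2 ∧ x.c3 = y.c3 ∧ x.c4 = y.c4 ∧ x.c5 = y.c5 ∧ x.c6 = y.c6 ∧
  (Good x →
    x.f2 = y.f2 ∧ x.c1 ∣ y.f1 - x.f1 ∧ x.c3 ∣ y.f3 - x.f3 ∧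
    (Int.gcd x.c1 x.c3 : ℤ) ∣ y.f4 - x.f4 ∧
    (x.c1 ∣ x.f1 → x.c3 ∣ x.f3 →
      x.c1 * (Int.gcd x.c3 x.f2 : ℤ) ∣
        (y.c1 * y.t1 + y.f1 * y.f4) - (x.c1 * x.t1 + x.f1 * x.f4) ∧
      x.c3 * (Int.gcd x.c1 x.f2 : ℤ) ∣
        (y.c3 * y.t2 + y.f3 * y.f4) - (x.c3 * x.t2 + x.f3 * x.f4)))

theorem Rrel_refl (x : Tuple) : Rrel x x := by
  refine ⟨rfl, rfl, rfl, rfl, rfl, rfl, fun _ => ⟨rfl, by simp, by simp, by simp, ?_⟩⟩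
  intro _ _
  simp

theorem Rrel_symm {x y : Tuple} (h : Rrel x y) : Rrel y x := by
  obtain ⟨c1, c2, c3, c4, c5, c6, f1, f2, f3, f4, t1, t2⟩ := x
  obtain ⟨d1, d2, d3, d4, d5, d6, g1, g2, g3, g4, u1, u2⟩ := y
  obtain ⟨e1, e2, e3, e4, e5, e6, hG⟩ := h
  simp only at e1 e2 e3 e4 e5 e6
  subst e1; subst e2; subst e3; subst e4; subst e5; subst e6
  refine ⟨rfl, rfl, rfl, rfl, rfl, rfl, fun g => ?_⟩
  obtain ⟨hf2, k1, k3, k4, hI⟩ := hG g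
  simp only at hf2 k1 k3 k4 hI ⊢
  subst hf2
  refine ⟨rfl, by simpa using dvd_neg.2 k1, by simpa using dvd_neg.2 k3,
    by simpa using dvd_neg.2 k4, fun hg1 hg3 => ?_⟩
  have hx1 : c1 ∣ f1 := by
    have := dvd_sub hg1 k1; simpa using this
  have hx3 : c3 ∣ f3 := by
    have := dvd_sub hg3 k3; simpa using this
  obtain ⟨hI1, hI2⟩ := hI hx1 hx3
  exact ⟨by simpa using dvd_neg.2 hI1, by simpa using dvd_neg.2 hI2⟩

theorem Rrel_trans {x y z : Tuple} (h : Rrel x y) (h' : Rrel y z) : Rrel x z := by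
  obtain ⟨c1, c2, c3, c4, c5, c6, f1, f2, f3, f4, t1, t2⟩ := x
  obtain ⟨d1, d2, d3, d4, d5, d6, g1, g2, g3, g4, u1, u2⟩ := y
  obtain ⟨b1, b2, b3, b4, b5, b6, e1, e2, e3, e4, v1, v2⟩ := z
  obtain ⟨q1, q2, q3, q4, q5, q6, hG⟩ := h
  obtain ⟨r1, r2, r3, r4, r5, r6, hG'⟩ := h'
  simp only at q1 q2 q3 q4 q5 q6 r1 r2 r3 r4 r5 r6
  subst q1; subst q2; subst q3; subst q4; subst q5; subst q6
  subst r1; subst r2; subst r3; subst r4; subst r5; subst r6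
  refine ⟨rfl, rfl, rfl, rfl, rfl, rfl, fun g => ?_⟩
  obtain ⟨hf2, k1, k3, k4, hI⟩ := hG g
  simp only at hf2 k1 k3 k4 hI
  subst hf2
  obtain ⟨hf2', k1', k3', k4', hI'⟩ := hG' g
  simp only at hf2' k1' k3' k4' hI' ⊢
  subst hf2'
  refine ⟨rfl, by simpa using dvd_add k1' k1, by simpa using dvd_add k3' k3,
    by simpa using dvd_add k4' k4, fun hx1 hx3 => ?_⟩
  have hy1 : c1 ∣ g1 := by have := dvd_add k1 hx1; simpa using this
  have hy3 : c3 ∣ g3 := by have := dvd_add k3 hx3; simpa using this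
  obtain ⟨hI1, hI2⟩ := hI hx1 hx3
  obtain ⟨hI1', hI2'⟩ := hI' hy1 hy3
  exact ⟨by simpa using dvd_add hI1' hI1, by simpa using dvd_add hI2' hI2⟩

theorem Rrel_step (x y : Tuple) (h : ∃ g ∈ psiMoves, g x = y) : Rrel x y := by
  obtain ⟨g, hg, rfl⟩ := h
  obtain ⟨c1, c2, c3, c4, c5, c6, f1, f2, f3, f4, t1, t2⟩ := x
  simp only [psiMoves, List.mem_cons, List.not_mem_nil, or_false] at hg
  have gcd1 : (Int.gcd c1 c3 : ℤ) ∣ c1 := Int.gcd_dvd_left c1 c3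
  have gcd3 : (Int.gcd c1 c3 : ℤ) ∣ c3 := Int.gcd_dvd_right c1 c3
  rcases hg with rfl | rfl | rfl | rfl | rfl | rfl | rfl | rfl
  · -- psi21 : f4 ↦ f4 - c1, t1 ↦ t1 + f1
    simp only [psi21, Equiv.coe_fn_mk, Rrel, Good]
    refine ⟨trivial, trivial, trivial, trivial, trivial, trivial, ?_⟩
    rintro ⟨rfl, rfl, rfl, rfl⟩
    refine ⟨by first | trivial | ring, ⟨0, by ring⟩, ⟨0, by ring⟩,
      Dvd.dvd.trans gcd1 ⟨-1, by ring⟩, fun hx1 hx3 => ?_⟩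
    obtain ⟨b, rfl⟩ := hx3
    exact ⟨⟨0, by ring⟩, Dvd.dvd.trans (mul_dvd_mul_left c3 (Int.gcd_dvd_left _ _)) ⟨-b, by ring⟩⟩
  · -- psi41 : t2 ↦ t2 - f1
    simp only [psi41, Equiv.coe_fn_mk, Rrel, Good]
    refine ⟨trivial, trivial, trivial, trivial, trivial, trivial, ?_⟩
    rintro ⟨rfl, rfl, rfl, rfl⟩
    refine ⟨by first | trivial | ring, ⟨0, by ring⟩, ⟨0, by ring⟩, ⟨0, by ring⟩,
      fun hx1 hx3 => ?_⟩
    obtain ⟨a, rfl⟩ := hx1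
    exact ⟨⟨0, by ring⟩, Dvd.dvd.trans (mul_dvd_mul_left c3 (Int.gcd_dvd_left _ _)) ⟨-a, by ring⟩⟩
  · -- psi12 : t1 ↦ t1 + f2
    simp only [psi12, Equiv.coe_fn_mk, Rrel, Good]
    refine ⟨trivial, trivial, trivial, trivial, trivial, trivial, ?_⟩
    rintro ⟨rfl, rfl, rfl, rfl⟩
    refine ⟨by first | trivial | ring, ⟨0, by ring⟩, ⟨0, by ring⟩, ⟨0, by ring⟩,
      fun hx1 hx3 => ?_⟩
    exact ⟨Dvd.dvd.trans (mul_dvd_mul_left c1 (Int.gcd_dvd_right _ _)) ⟨1, by ring⟩, ⟨0, by ring⟩⟩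
  · -- psi32 : t2 ↦ t2 - f2
    simp only [psi32, Equiv.coe_fn_mk, Rrel, Good]
    refine ⟨trivial, trivial, trivial, trivial, trivial, trivial, ?_⟩
    rintro ⟨rfl, rfl, rfl, rfl⟩
    refine ⟨by first | trivial | ring, ⟨0, by ring⟩, ⟨0, by ring⟩, ⟨0, by ring⟩,
      fun hx1 hx3 => ?_⟩
    exact ⟨⟨0, by ring⟩, Dvd.dvd.trans (mul_dvd_mul_left c3 (Int.gcd_dvd_right _ _)) ⟨-1, by ring⟩⟩
  · -- psi43 : t1 ↦ t1 + f3
    simp only [psi43, Equiv.coe_fn_mk, Rrel, Good]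
    refine ⟨trivial, trivial, trivial, trivial, trivial, trivial, ?_⟩
    rintro ⟨rfl, rfl, rfl, rfl⟩
    refine ⟨by first | trivial | ring, ⟨0, by ring⟩, ⟨0, by ring⟩, ⟨0, by ring⟩,
      fun hx1 hx3 => ?_⟩
    obtain ⟨b, rfl⟩ := hx3
    exact ⟨Dvd.dvd.trans (mul_dvd_mul_left c1 (Int.gcd_dvd_left _ _)) ⟨b, by ring⟩, ⟨0, by ring⟩⟩
  · -- psi23 : f4 ↦ f4 + c3, t2 ↦ t2 - f3
    simp only [psi23, Equiv.coe_fn_mk, Rrel, Good]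
    refine ⟨trivial, trivial, trivial, trivial, trivial, trivial, ?_⟩
    rintro ⟨rfl, rfl, rfl, rfl⟩
    refine ⟨by first | trivial | ring, ⟨0, by ring⟩, ⟨0, by ring⟩,
      Dvd.dvd.trans gcd3 ⟨1, by ring⟩, fun hx1 hx3 => ?_⟩
    obtain ⟨a, rfl⟩ := hx1
    exact ⟨Dvd.dvd.trans (mul_dvd_mul_left c1 (Int.gcd_dvd_left _ _)) ⟨a, by ring⟩, ⟨0, by ring⟩⟩
  · -- psi34 : f1 ↦ f1 - c1, t1 ↦ t1 + f4
    simp only [psi34, Equiv.coe_fn_mk, Rrel, Good]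
    refine ⟨trivial, trivial, trivial, trivial, trivial, trivial, ?_⟩
    rintro ⟨rfl, rfl, rfl, rfl⟩
    exact ⟨by first | trivial | ring, ⟨-1, by ring⟩, ⟨0, by ring⟩, ⟨0, by ring⟩,
      fun hx1 hx3 => ⟨⟨0, by ring⟩, ⟨0, by ring⟩⟩⟩
  · -- psi14 : f2 ↦ f2, f3 ↦ f3 + c3, t2 ↦ t2 - f4
    simp only [psi14, Equiv.coe_fn_mk, Rrel, Good]
    refine ⟨trivial, trivial, trivial, trivial, trivial, trivial, ?_⟩
    rintro ⟨rfl, rfl, rfl, rfl⟩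
    exact ⟨by first | trivial | ring, ⟨0, by ring⟩, ⟨1, by ring⟩, ⟨0, by ring⟩,
      fun hx1 hx3 => ⟨⟨0, by ring⟩, ⟨0, by ring⟩⟩⟩

theorem psiEquiv_Rrel {x y : Tuple} (h : PsiEquiv x y) : Rrel x y := by
  induction h with
  | rel a b hab => exact Rrel_step a b hab
  | refl a => exact Rrel_refl a
  | symm a b _ ih => exact Rrel_symm ih
  | trans a b c _ _ ih1 ih2 => exact Rrel_trans ih1 ih2

end PsiAux
/-- Classification when c₂ = c₄ = c₅ = c₆ = 0, c₁, c₃ ≠ 0, c₁ ∣ f₁ and c₃ ∣ f₃: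
two such tuples are ψ-equivalent iff f₂ = f₂′, f₄ ≡ f₄′ (mod gcd(c₁,c₃)),
c₁t₁+f₁f₄ ≡ c₁t₁′+f₁′f₄′ (mod c₁·gcd(c₃,f₂)) and
c₃t₂+f₃f₄ ≡ c₃t₂′+f₃′f₄′ (mod c₃·gcd(c₁,f₂)). -/
theorem classification_case1 (c1 c3 f1 f2 f3 f4 t1 t2 f1' f2' f3' f4' t1' t2' : ℤ)
    (hc1 : c1 ≠ 0) (hc3 : c3 ≠ 0)
    (h1 : c1 ∣ f1) (h1' : c1 ∣ f1') (h3 : c3 ∣ f3) (h3' : c3 ∣ f3') :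
    PsiEquiv ⟨c1, 0, c3, 0, 0, 0, f1, f2, f3, f4, t1, t2⟩
        ⟨c1, 0, c3, 0, 0, 0, f1', f2', f3', f4', t1', t2'⟩ ↔
      (f2 = f2' ∧
        (Int.gcd c1 c3 : ℤ) ∣ f4 - f4' ∧
        c1 * (Int.gcd c3 f2 : ℤ) ∣ (c1 * t1 + f1 * f4) - (c1 * t1' + f1' * f4') ∧
        c3 * (Int.gcd c1 f2 : ℤ) ∣ (c3 * t2 + f3 * f4) - (c3 * t2' + f3' * f4')) := by
  constructor
  · intro h
    have R := PsiAux.psiEquiv_Rrel h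
    obtain ⟨-, -, -, -, -, -, hG⟩ := R
    obtain ⟨hf2, k1, k3, k4, hI⟩ := hG ⟨rfl, rfl, rfl, rfl⟩
    obtain ⟨hI1, hI2⟩ := hI h1 h3
    exact ⟨hf2, dvd_sub_comm.1 k4, dvd_sub_comm.1 hI1, dvd_sub_comm.1 hI2⟩
  · rintro ⟨rfl, hf4, hI1, hI2⟩
    obtain ⟨k1, rfl⟩ := h1
    obtain ⟨k1', rfl⟩ := h1'
    obtain ⟨k3, rfl⟩ := h3
    obtain ⟨k3', rfl⟩ := h3'
    exact PsiAux.backward c1 c3 f2 f4 t1 t2 f4' t1' t2' k1 k3 k1' k3' hc1 hc3 hf4 hI1 hI2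
end

section
/- Let T = (c₁,0,c₁,0,0,0,f₁,f₂,f₃,f₄,t₁,t₂) and T′ = (c₁,0,c₁,0,0,0,f₁′,f₂′,f₃′,f₄′,t₁′,t₂′) be tuples in ℤ¹² with the same value c₁ ≠ 0 (so c₃ = c₁ and c₂ = c₄ = c₅ = c₆ = 0), and suppose gcd(c₁,f₂,f₃) ∣ f₁, gcd(c₁,f₂′,f₃′) ∣ f₁′, gcd(c₁,f₁,f₂) ∣ f₃ and gcd(c₁,f₁′,f₂′) ∣ f₃′. Then T and T′ are ψ-equivalent if and only if: f₁ ≡ f₁′ (mod c₁); f₂ = f₂′; f₃ ≡ f₃′ (mod c₁); f₄ ≡ f₄′ (mod c₁); c₁t₁ + f₁f₄ ≡ c₁t₁′ + f₁′f₄′ (mod c₁·gcd(c₁,f₁,f₂,f₃)); and c₁t₂ + f₃f₄ ≡ c₁t₂′ + f₃′f₄′ (mod c₁·gcd(c₁,f₁,f₂,f₃)). -/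
namespace PsiAux

/-! ### gcd helpers -/

lemma dvd_gcd3_iff {d : ℤ} (c a b : ℤ) :
    d ∣ (Int.gcd c (Int.gcd a b) : ℤ) ↔ d ∣ c ∧ d ∣ a ∧ d ∣ b := by
  constructor
  · intro h
    exact ⟨h.trans (Int.gcd_dvd_left _ _), (h.trans (Int.gcd_dvd_right _ _)).trans (Int.gcd_dvd_left _ _),
      (h.trans (Int.gcd_dvd_right _ _)).trans (Int.gcd_dvd_right _ _)⟩
  · rintro ⟨h1, h2, h3⟩
    exact Int.dvd_coe_gcd h1 (Int.dvd_coe_gcd h2 h3)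

lemma dvd_gcd4_iff {d : ℤ} (c a b e : ℤ) :
    d ∣ (Int.gcd c (Int.gcd a (Int.gcd b e)) : ℤ) ↔ d ∣ c ∧ d ∣ a ∧ d ∣ b ∧ d ∣ e := by
  constructor
  · intro h
    have h2 := h.trans (Int.gcd_dvd_right _ _)
    exact ⟨h.trans (Int.gcd_dvd_left _ _), h2.trans (Int.gcd_dvd_left _ _),
      (h2.trans (Int.gcd_dvd_right _ _)).trans (Int.gcd_dvd_left _ _),
      (h2.trans (Int.gcd_dvd_right _ _)).trans (Int.gcd_dvd_right _ _)⟩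
  · rintro ⟨h1, h2, h3, h4⟩
    exact Int.dvd_coe_gcd h1 (Int.dvd_coe_gcd h2 (Int.dvd_coe_gcd h3 h4))

lemma gcd4_congr (c a b e a' e' : ℤ) (ha : c ∣ a - a') (he : c ∣ e - e') :
    Int.gcd c (Int.gcd a (Int.gcd b e)) = Int.gcd c (Int.gcd a' (Int.gcd b e')) := by
  apply Nat.dvd_antisymm <;> rw [← Int.natCast_dvd_natCast]
  · obtain ⟨hc, h2, h3, h4⟩ := (dvd_gcd4_iff c a b e).mp dvd_rfl
    rw [dvd_gcd4_iff]
    refine ⟨hc, ?_, h3, ?_⟩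
    · have := dvd_sub h2 (hc.trans ha); simpa using this
    · have := dvd_sub h4 (hc.trans he); simpa using this
  · obtain ⟨hc, h2, h3, h4⟩ := (dvd_gcd4_iff c a' b e').mp dvd_rfl
    rw [dvd_gcd4_iff]
    refine ⟨hc, ?_, h3, ?_⟩
    · have := dvd_add h2 (hc.trans ha); simpa using this
    · have := dvd_add h4 (hc.trans he); simpa using this

/-! ### Invariants -/

def IA (x : Tuple) : ℤ := x.c1 * x.t1 + x.f1 * x.f4
def IB (x : Tuple) : ℤ := x.c1 * x.t2 + x.f3 * x.f4
def IG (x : Tuple) : ℤ := (Int.gcd x.c1 (Int.gcd x.f1 (Int.gcd x.f2 x.f3)) : ℤ)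

def Inv (x y : Tuple) : Prop :=
  x.c1 = y.c1 ∧ x.c2 = y.c2 ∧ x.c3 = y.c3 ∧ x.c4 = y.c4 ∧ x.c5 = y.c5 ∧ x.c6 = y.c6 ∧
  (x.c2 = 0 → x.c3 = x.c1 → x.c4 = 0 → x.c5 = 0 → x.c6 = 0 →
    (x.c1 ∣ x.f1 - y.f1 ∧ x.f2 = y.f2 ∧ x.c1 ∣ x.f3 - y.f3 ∧ x.c1 ∣ x.f4 - y.f4 ∧
     x.c1 * IG x ∣ IA x - IA y ∧ x.c1 * IG x ∣ IB x - IB y))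

lemma inv_refl (x : Tuple) : Inv x x := by
  refine ⟨rfl, rfl, rfl, rfl, rfl, rfl, fun _ _ _ _ _ => ?_⟩
  exact ⟨⟨0, by ring⟩, rfl, ⟨0, by ring⟩, ⟨0, by ring⟩, ⟨0, by ring⟩, ⟨0, by ring⟩⟩

lemma IG_eq_of (x y : Tuple) (hc : x.c1 = y.c1) (h1 : x.c1 ∣ x.f1 - y.f1) (h2 : x.f2 = y.f2)
    (h3 : x.c1 ∣ x.f3 - y.f3) : IG x = IG y := by
  unfold IG
  rw [← hc, ← h2]
  exact_mod_cast congrArg (Nat.cast : ℕ → ℤ) (gcd4_congr x.c1 x.f1 x.f2 x.f3 y.f1 y.f3 h1 h3)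

lemma inv_symm {x y : Tuple} (h : Inv x y) : Inv y x := by
  obtain ⟨e1, e2, e3, e4, e5, e6, hp⟩ := h
  refine ⟨e1.symm, e2.symm, e3.symm, e4.symm, e5.symm, e6.symm, fun s2 s3 s4 s5 s6 => ?_⟩
  obtain ⟨p1, p2, p3, p4, p5, p6⟩ := hp (e2.trans s2) (by rw [e3, s3, e1]) (e4.trans s4)
    (e5.trans s5) (e6.trans s6)
  have hg : IG x = IG y := IG_eq_of x y e1 p1 p2 p3
  rw [← e1, ← hg]
  exact ⟨by simpa [neg_sub] using dvd_neg.mpr p1, p2.symm, by simpa [neg_sub] using dvd_neg.mpr p3,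
    by simpa [neg_sub] using dvd_neg.mpr p4, by simpa [neg_sub] using dvd_neg.mpr p5,
    by simpa [neg_sub] using dvd_neg.mpr p6⟩

lemma inv_trans {x y z : Tuple} (h : Inv x y) (h' : Inv y z) : Inv x z := by
  obtain ⟨e1, e2, e3, e4, e5, e6, hp⟩ := h
  obtain ⟨e1', e2', e3', e4', e5', e6', hp'⟩ := h'
  refine ⟨e1.trans e1', e2.trans e2', e3.trans e3', e4.trans e4', e5.trans e5', e6.trans e6',
    fun s2 s3 s4 s5 s6 => ?_⟩
  obtain ⟨p1, p2, p3, p4, p5, p6⟩ := hp s2 s3 s4 s5 s6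
  obtain ⟨q1, q2, q3, q4, q5, q6⟩ := hp' (e2 ▸ s2) (by rw [← e3, s3, e1]) (e4 ▸ s4)
    (e5 ▸ s5) (e6 ▸ s6)
  have hg : IG x = IG y := IG_eq_of x y e1 p1 p2 p3
  rw [← e1] at q1 q3 q4 q5 q6
  rw [← hg] at q5 q6
  refine ⟨by simpa using dvd_add p1 q1, p2.trans q2, by simpa using dvd_add p3 q3,
    by simpa using dvd_add p4 q4, by simpa using dvd_add p5 q5, by simpa using dvd_add p6 q6⟩

end PsiAux
namespace PsiAux

lemma inv_gen (g : Equiv.Perm Tuple) (hg : g ∈ psiMoves) (x : Tuple) : Inv x (g x) := by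
  obtain ⟨c1, c2, c3, c4, c5, c6, f1, f2, f3, f4, t1, t2⟩ := x
  obtain ⟨w1, hw1⟩ : (Int.gcd c1 (Int.gcd f1 (Int.gcd f2 f3)) : ℤ) ∣ f1 :=
    ((Int.gcd_dvd_right _ _).trans (Int.gcd_dvd_left _ _) :)
  obtain ⟨w2, hw2⟩ : (Int.gcd c1 (Int.gcd f1 (Int.gcd f2 f3)) : ℤ) ∣ f2 :=
    (((Int.gcd_dvd_right _ _).trans (Int.gcd_dvd_right _ _)).trans (Int.gcd_dvd_left _ _) :)
  obtain ⟨w3, hw3⟩ : (Int.gcd c1 (Int.gcd f1 (Int.gcd f2 f3)) : ℤ) ∣ f3 :=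
    (((Int.gcd_dvd_right _ _).trans (Int.gcd_dvd_right _ _)).trans (Int.gcd_dvd_right _ _) :)
  simp only [psiMoves, List.mem_cons, List.not_mem_nil, or_false] at hg
  unfold Inv IA IB IG
  rcases hg with rfl|rfl|rfl|rfl|rfl|rfl|rfl|rfl
  · simp only [psi21, Equiv.coe_fn_mk]
    refine ⟨by trivial, by trivial, by trivial, by trivial, by trivial, by trivial, ?_⟩
    rintro rfl rfl rfl rfl rfl
    refine ⟨⟨0, by ring⟩, by trivial, ⟨0, by ring⟩, ⟨1, by ring⟩, ⟨0, by ring⟩,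
      ⟨w3, by first | linear_combination c3 * hw3 | linear_combination c1 * hw3⟩⟩
  · simp only [psi41, Equiv.coe_fn_mk]
    refine ⟨by trivial, by trivial, by trivial, by trivial, by trivial, by trivial, ?_⟩
    rintro rfl rfl rfl rfl rfl
    refine ⟨⟨0, by ring⟩, by ring, ⟨0, by ring⟩, ⟨0, by ring⟩, ⟨0, by ring⟩,
      ⟨w1, by first | linear_combination c3 * hw1 | linear_combination c1 * hw1⟩⟩
  · simp only [psi12, Equiv.coe_fn_mk]
    refine ⟨by trivial, by trivial, by trivial, by trivial, by trivial, by trivial, ?_⟩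
    rintro rfl rfl rfl rfl rfl
    refine ⟨⟨0, by ring⟩, by trivial, ⟨0, by ring⟩, ⟨0, by ring⟩,
      ⟨-w2, by first | linear_combination (-c3) * hw2 | linear_combination (-c1) * hw2⟩,
      ⟨0, by ring⟩⟩
  · simp only [psi32, Equiv.coe_fn_mk]
    refine ⟨by trivial, by trivial, by trivial, by trivial, by trivial, by trivial, ?_⟩
    rintro rfl rfl rfl rfl rfl
    refine ⟨⟨0, by ring⟩, by trivial, ⟨0, by ring⟩, ⟨0, by ring⟩, ⟨0, by ring⟩,
      ⟨w2, by first | linear_combination c3 * hw2 | linear_combination c1 * hw2⟩⟩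
  · simp only [psi43, Equiv.coe_fn_mk]
    refine ⟨by trivial, by trivial, by trivial, by trivial, by trivial, by trivial, ?_⟩
    rintro rfl rfl rfl rfl rfl
    refine ⟨⟨0, by ring⟩, by ring, ⟨0, by ring⟩, ⟨0, by ring⟩,
      ⟨-w3, by first | linear_combination (-c3) * hw3 | linear_combination (-c1) * hw3⟩,
      ⟨0, by ring⟩⟩
  · simp only [psi23, Equiv.coe_fn_mk]
    refine ⟨by trivial, by trivial, by trivial, by trivial, by trivial, by trivial, ?_⟩
    rintro rfl rfl rfl rfl rfl
    refine ⟨⟨0, by ring⟩, by trivial, ⟨0, by ring⟩, ⟨-1, by ring⟩,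
      ⟨-w1, by first | linear_combination (-c3) * hw1 | linear_combination (-c1) * hw1⟩,
      ⟨0, by ring⟩⟩
  · simp only [psi34, Equiv.coe_fn_mk]
    refine ⟨by trivial, by trivial, by trivial, by trivial, by trivial, by trivial, ?_⟩
    rintro rfl rfl rfl rfl rfl
    refine ⟨⟨1, by ring⟩, by ring, ⟨0, by ring⟩, ⟨0, by ring⟩, ⟨0, by ring⟩, ⟨0, by ring⟩⟩
  · simp only [psi14, Equiv.coe_fn_mk]
    refine ⟨by trivial, by trivial, by trivial, by trivial, by trivial, by trivial, ?_⟩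
    rintro rfl rfl rfl rfl rfl
    refine ⟨⟨0, by ring⟩, by ring, ⟨-1, by ring⟩, ⟨0, by ring⟩, ⟨0, by ring⟩, ⟨0, by ring⟩⟩

lemma inv_of_psiEquiv {x y : Tuple} (h : PsiEquiv x y) : Inv x y := by
  induction h with
  | rel a b hab => obtain ⟨g, hg, rfl⟩ := hab; exact inv_gen g hg a
  | refl a => exact inv_refl a
  | symm a b _ ih => exact inv_symm ih
  | trans a b c _ _ ih1 ih2 => exact inv_trans ih1 ih2

end PsiAux
namespace PsiAux

def X (c1 f2 f1 f3 f4 t1 t2 : ℤ) : Tuple := ⟨c1, 0, c1, 0, 0, 0, f1, f2, f3, f4, t1, t2⟩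

variable {c1 f2 : ℤ}

lemma step21 (f1 f3 f4 t1 t2 : ℤ) :
    PsiEquiv (X c1 f2 f1 f3 f4 t1 t2) (X c1 f2 f1 f3 (f4 - c1) (t1 + f1) t2) :=
  Relation.EqvGen.rel _ _ ⟨psi21, by simp [psiMoves], by simp [psi21, X]⟩

lemma step41 (f1 f3 f4 t1 t2 : ℤ) :
    PsiEquiv (X c1 f2 f1 f3 f4 t1 t2) (X c1 f2 f1 f3 f4 t1 (t2 - f1)) :=
  Relation.EqvGen.rel _ _ ⟨psi41, by simp [psiMoves], by simp [psi41, X]⟩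

lemma step12 (f1 f3 f4 t1 t2 : ℤ) :
    PsiEquiv (X c1 f2 f1 f3 f4 t1 t2) (X c1 f2 f1 f3 f4 (t1 + f2) t2) :=
  Relation.EqvGen.rel _ _ ⟨psi12, by simp [psiMoves], by simp [psi12, X]⟩

lemma step32 (f1 f3 f4 t1 t2 : ℤ) :
    PsiEquiv (X c1 f2 f1 f3 f4 t1 t2) (X c1 f2 f1 f3 f4 t1 (t2 - f2)) :=
  Relation.EqvGen.rel _ _ ⟨psi32, by simp [psiMoves], by simp [psi32, X]⟩

lemma step43 (f1 f3 f4 t1 t2 : ℤ) :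
    PsiEquiv (X c1 f2 f1 f3 f4 t1 t2) (X c1 f2 f1 f3 f4 (t1 + f3) t2) :=
  Relation.EqvGen.rel _ _ ⟨psi43, by simp [psiMoves], by simp [psi43, X]⟩

lemma step23 (f1 f3 f4 t1 t2 : ℤ) :
    PsiEquiv (X c1 f2 f1 f3 f4 t1 t2) (X c1 f2 f1 f3 (f4 + c1) t1 (t2 - f3)) :=
  Relation.EqvGen.rel _ _ ⟨psi23, by simp [psiMoves], by simp [psi23, X]⟩

lemma step34 (f1 f3 f4 t1 t2 : ℤ) :
    PsiEquiv (X c1 f2 f1 f3 f4 t1 t2) (X c1 f2 (f1 - c1) f3 f4 (t1 + f4) t2) :=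
  Relation.EqvGen.rel _ _ ⟨psi34, by simp [psiMoves], by simp [psi34, X]⟩

lemma step14 (f1 f3 f4 t1 t2 : ℤ) :
    PsiEquiv (X c1 f2 f1 f3 f4 t1 t2) (X c1 f2 f1 (f3 + c1) f4 t1 (t2 - f4)) :=
  Relation.EqvGen.rel _ _ ⟨psi14, by simp [psiMoves], by simp [psi14, X]⟩

lemma psiEquiv_trans {a b c : Tuple} (h1 : PsiEquiv a b) (h2 : PsiEquiv b c) : PsiEquiv a c :=
  Relation.EqvGen.trans _ _ _ h1 h2

lemma psiEquiv_symm {a b : Tuple} (h1 : PsiEquiv a b) : PsiEquiv b a :=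
  Relation.EqvGen.symm _ _ h1

lemma psiEquiv_refl (a : Tuple) : PsiEquiv a a := Relation.EqvGen.refl a

lemma X_congr {a1 a2 a3 a4 a5 b1 b2 b3 b4 b5 : ℤ} (h1 : a1 = b1) (h2 : a2 = b2) (h3 : a3 = b3)
    (h4 : a4 = b4) (h5 : a5 = b5) : X c1 f2 a1 a2 a3 a4 a5 = X c1 f2 b1 b2 b3 b4 b5 := by
  rw [h1, h2, h3, h4, h5]

lemma iter34 (k : ℤ) : ∀ f1 f3 f4 t1 t2 : ℤ,
    PsiEquiv (X c1 f2 f1 f3 f4 t1 t2) (X c1 f2 (f1 - k * c1) f3 f4 (t1 + k * f4) t2) := by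
  induction k using Int.induction_on with
  | zero => intro f1 f3 f4 t1 t2
            rw [show X c1 f2 (f1 - 0 * c1) f3 f4 (t1 + 0 * f4) t2 = X c1 f2 f1 f3 f4 t1 t2 from
              X_congr (by ring) rfl rfl (by ring) rfl]
            exact psiEquiv_refl _
  | succ i ih =>
      intro f1 f3 f4 t1 t2
      refine psiEquiv_trans (ih f1 f3 f4 t1 t2) ?_
      rw [X_congr (show f1 - (i + 1 : ℤ) * c1 = (f1 - i * c1) - c1 by ring) rfl rfl
        (show t1 + (i + 1 : ℤ) * f4 = (t1 + i * f4) + f4 by ring) rfl]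
      exact step34 _ _ _ _ _
  | pred i ih =>
      intro f1 f3 f4 t1 t2
      refine psiEquiv_trans (ih f1 f3 f4 t1 t2) (psiEquiv_symm ?_)
      rw [show (X c1 f2 (f1 - (-i : ℤ) * c1) f3 f4 (t1 + (-i : ℤ) * f4) t2) =
        (X c1 f2 ((f1 - (-i - 1 : ℤ) * c1) - c1) f3 f4 ((t1 + (-i - 1 : ℤ) * f4) + f4) t2) from
        X_congr (by ring) rfl rfl (by ring) rfl]
      exact step34 _ _ _ _ _

lemma iter14 (k : ℤ) : ∀ f1 f3 f4 t1 t2 : ℤ,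
    PsiEquiv (X c1 f2 f1 f3 f4 t1 t2) (X c1 f2 f1 (f3 + k * c1) f4 t1 (t2 - k * f4)) := by
  induction k using Int.induction_on with
  | zero => intro f1 f3 f4 t1 t2
            rw [show X c1 f2 f1 (f3 + 0 * c1) f4 t1 (t2 - 0 * f4) = X c1 f2 f1 f3 f4 t1 t2 from
              X_congr rfl (by ring) rfl rfl (by ring)]
            exact psiEquiv_refl _
  | succ i ih =>
      intro f1 f3 f4 t1 t2
      refine psiEquiv_trans (ih f1 f3 f4 t1 t2) ?_
      rw [X_congr rfl (show f3 + (i + 1 : ℤ) * c1 = (f3 + i * c1) + c1 by ring) rfl rfl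
        (show t2 - (i + 1 : ℤ) * f4 = (t2 - i * f4) - f4 by ring)]
      exact step14 _ _ _ _ _
  | pred i ih =>
      intro f1 f3 f4 t1 t2
      refine psiEquiv_trans (ih f1 f3 f4 t1 t2) (psiEquiv_symm ?_)
      rw [show (X c1 f2 f1 (f3 + (-i : ℤ) * c1) f4 t1 (t2 - (-i : ℤ) * f4)) =
        (X c1 f2 f1 ((f3 + (-i - 1 : ℤ) * c1) + c1) f4 t1 ((t2 - (-i - 1 : ℤ) * f4) - f4)) from
        X_congr rfl (by ring) rfl rfl (by ring)]
      exact step14 _ _ _ _ _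

lemma iter21 (k : ℤ) : ∀ f1 f3 f4 t1 t2 : ℤ,
    PsiEquiv (X c1 f2 f1 f3 f4 t1 t2) (X c1 f2 f1 f3 (f4 - k * c1) (t1 + k * f1) t2) := by
  induction k using Int.induction_on with
  | zero => intro f1 f3 f4 t1 t2
            rw [show X c1 f2 f1 f3 (f4 - 0 * c1) (t1 + 0 * f1) t2 = X c1 f2 f1 f3 f4 t1 t2 from
              X_congr rfl rfl (by ring) (by ring) rfl]
            exact psiEquiv_refl _
  | succ i ih =>
      intro f1 f3 f4 t1 t2
      refine psiEquiv_trans (ih f1 f3 f4 t1 t2) ?_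
      rw [X_congr rfl rfl (show f4 - (i + 1 : ℤ) * c1 = (f4 - i * c1) - c1 by ring)
        (show t1 + (i + 1 : ℤ) * f1 = (t1 + i * f1) + f1 by ring) rfl]
      exact step21 _ _ _ _ _
  | pred i ih =>
      intro f1 f3 f4 t1 t2
      refine psiEquiv_trans (ih f1 f3 f4 t1 t2) (psiEquiv_symm ?_)
      rw [show (X c1 f2 f1 f3 (f4 - (-i : ℤ) * c1) (t1 + (-i : ℤ) * f1) t2) =
        (X c1 f2 f1 f3 ((f4 - (-i - 1 : ℤ) * c1) - c1) ((t1 + (-i - 1 : ℤ) * f1) + f1) t2) from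
        X_congr rfl rfl (by ring) (by ring) rfl]
      exact step21 _ _ _ _ _

end PsiAux
namespace PsiAux

variable {c1 f2 : ℤ}

/-- Pure `(t1,t2)` shifts available at fixed `f`-coordinates. -/
def Sh (c1 f2 f1 f3 f4 u v : ℤ) : Prop :=
  ∀ t1 t2 : ℤ, PsiEquiv (X c1 f2 f1 f3 f4 t1 t2) (X c1 f2 f1 f3 f4 (t1 + u) (t2 + v))

variable {f1 f3 f4 : ℤ}

lemma Sh_congr {u v u' v' : ℤ} (hu : u = u') (hv : v = v') (h : Sh c1 f2 f1 f3 f4 u v) :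
    Sh c1 f2 f1 f3 f4 u' v' := hu ▸ hv ▸ h

lemma Sh_zero : Sh c1 f2 f1 f3 f4 0 0 := fun t1 t2 => by
  rw [add_zero, add_zero]; exact psiEquiv_refl _

lemma Sh_add {u v u' v' : ℤ} (h : Sh c1 f2 f1 f3 f4 u v) (h' : Sh c1 f2 f1 f3 f4 u' v') :
    Sh c1 f2 f1 f3 f4 (u + u') (v + v') := fun t1 t2 => by
  refine psiEquiv_trans (h t1 t2) ?_
  rw [show t1 + (u + u') = (t1 + u) + u' by ring, show t2 + (v + v') = (t2 + v) + v' by ring]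
  exact h' _ _

lemma Sh_neg {u v : ℤ} (h : Sh c1 f2 f1 f3 f4 u v) : Sh c1 f2 f1 f3 f4 (-u) (-v) := fun t1 t2 => by
  have h2 := h (t1 - u) (t2 - v)
  rw [show t1 - u + u = t1 by ring, show t2 - v + v = t2 by ring] at h2
  have h3 := psiEquiv_symm h2
  rw [show t1 - u = t1 + -u by ring, show t2 - v = t2 + -v by ring] at h3
  exact h3

lemma Sh_smul {u v : ℤ} (h : Sh c1 f2 f1 f3 f4 u v) (k : ℤ) :
    Sh c1 f2 f1 f3 f4 (k * u) (k * v) := by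
  induction k using Int.induction_on with
  | zero => exact Sh_congr (by ring) (by ring) Sh_zero
  | succ i ih => exact Sh_congr (by ring) (by ring) (Sh_add ih h)
  | pred i ih => exact Sh_congr (by ring) (by ring) (Sh_add ih (Sh_neg h))

lemma Sh_f2 : Sh c1 f2 f1 f3 f4 f2 0 := fun t1 t2 => by
  rw [add_zero]; exact step12 _ _ _ _ _

lemma Sh_f3 : Sh c1 f2 f1 f3 f4 f3 0 := fun t1 t2 => by
  rw [add_zero]; exact step43 _ _ _ _ _

lemma Sh_nf1 : Sh c1 f2 f1 f3 f4 0 (-f1) := fun t1 t2 => by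
  rw [add_zero, show t2 + -f1 = t2 - f1 by ring]; exact step41 _ _ _ _ _

lemma Sh_nf2 : Sh c1 f2 f1 f3 f4 0 (-f2) := fun t1 t2 => by
  rw [add_zero, show t2 + -f2 = t2 - f2 by ring]; exact step32 _ _ _ _ _

lemma Sh_nc1_left : Sh c1 f2 f1 f3 f4 (-c1) 0 := fun t1 t2 => by
  rw [add_zero, show t1 + -c1 = t1 - c1 by ring]
  refine psiEquiv_trans (step43 f1 f3 f4 t1 t2) ?_
  refine psiEquiv_trans (step14 f1 f3 f4 (t1 + f3) t2) ?_
  have h3 := step43 (c1 := c1) (f2 := f2) f1 (f3 + c1) f4 (t1 - c1) (t2 - f4)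
  rw [show t1 - c1 + (f3 + c1) = t1 + f3 by ring] at h3
  refine psiEquiv_trans (psiEquiv_symm h3) ?_
  have h4 := step14 (c1 := c1) (f2 := f2) f1 f3 f4 (t1 - c1) t2
  exact psiEquiv_symm h4

lemma Sh_nc1_right : Sh c1 f2 f1 f3 f4 0 (-c1) := fun t1 t2 => by
  rw [add_zero, show t2 + -c1 = t2 - c1 by ring]
  refine psiEquiv_trans (step41 f1 f3 f4 t1 t2) ?_
  refine psiEquiv_trans (step34 f1 f3 f4 t1 (t2 - f1)) ?_
  have h3 := step41 (c1 := c1) (f2 := f2) (f1 - c1) f3 f4 (t1 + f4) (t2 - c1)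
  rw [show t2 - c1 - (f1 - c1) = t2 - f1 by ring] at h3
  refine psiEquiv_trans (psiEquiv_symm h3) ?_
  have h4 := step34 (c1 := c1) (f2 := f2) f1 f3 f4 t1 (t2 - c1)
  exact psiEquiv_symm h4

lemma Sh_comb_left (p q r : ℤ) : Sh c1 f2 f1 f3 f4 (p * c1 + q * f2 + r * f3) 0 := by
  have h := Sh_add (Sh_add (Sh_smul (Sh_nc1_left (c1 := c1) (f2 := f2) (f1 := f1) (f3 := f3)
    (f4 := f4)) (-p)) (Sh_smul Sh_f2 q)) (Sh_smul Sh_f3 r)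
  exact Sh_congr (by ring) (by ring) h

lemma Sh_comb_right (p q r : ℤ) : Sh c1 f2 f1 f3 f4 0 (p * c1 + q * f1 + r * f2) := by
  have h := Sh_add (Sh_add (Sh_smul (Sh_nc1_right (c1 := c1) (f2 := f2) (f1 := f1) (f3 := f3)
    (f4 := f4)) (-p)) (Sh_smul Sh_nf1 (-q))) (Sh_smul Sh_nf2 (-r))
  exact Sh_congr (by ring) (by ring) h

lemma Sh_gcd_left : Sh c1 f2 f1 f3 f4 (Int.gcd c1 (Int.gcd f2 f3) : ℤ) 0 := by
  have e1 : (Int.gcd c1 (Int.gcd f2 f3) : ℤ) =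
      c1 * Int.gcdA c1 (Int.gcd f2 f3) + (Int.gcd f2 f3 : ℤ) * Int.gcdB c1 (Int.gcd f2 f3) :=
    Int.gcd_eq_gcd_ab _ _
  have e2 : (Int.gcd f2 f3 : ℤ) = f2 * Int.gcdA f2 f3 + f3 * Int.gcdB f2 f3 :=
    Int.gcd_eq_gcd_ab _ _
  refine Sh_congr ?_ rfl (Sh_comb_left (Int.gcdA c1 (Int.gcd f2 f3))
    (Int.gcdA f2 f3 * Int.gcdB c1 (Int.gcd f2 f3)) (Int.gcdB f2 f3 * Int.gcdB c1 (Int.gcd f2 f3)))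
  rw [e1, e2]; ring

lemma Sh_gcd_right : Sh c1 f2 f1 f3 f4 0 (Int.gcd c1 (Int.gcd f1 f2) : ℤ) := by
  have e1 : (Int.gcd c1 (Int.gcd f1 f2) : ℤ) =
      c1 * Int.gcdA c1 (Int.gcd f1 f2) + (Int.gcd f1 f2 : ℤ) * Int.gcdB c1 (Int.gcd f1 f2) :=
    Int.gcd_eq_gcd_ab _ _
  have e2 : (Int.gcd f1 f2 : ℤ) = f1 * Int.gcdA f1 f2 + f2 * Int.gcdB f1 f2 :=
    Int.gcd_eq_gcd_ab _ _
  refine Sh_congr rfl ?_ (Sh_comb_right (Int.gcdA c1 (Int.gcd f1 f2))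
    (Int.gcdA f1 f2 * Int.gcdB c1 (Int.gcd f1 f2)) (Int.gcdB f1 f2 * Int.gcdB c1 (Int.gcd f1 f2)))
  rw [e1, e2]; ring

lemma Sh_main (m n : ℤ) :
    Sh c1 f2 f1 f3 f4 (m * (Int.gcd c1 (Int.gcd f2 f3) : ℤ))
      (n * (Int.gcd c1 (Int.gcd f1 f2) : ℤ)) := by
  have h := Sh_add (Sh_smul (Sh_gcd_left (c1 := c1) (f2 := f2) (f1 := f1) (f3 := f3)
    (f4 := f4)) m) (Sh_smul Sh_gcd_right n)
  exact Sh_congr (by ring) (by ring) h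

end PsiAux

/-- Classification when c₂ = c₄ = c₅ = c₆ = 0, c₃ = c₁ ≠ 0, gcd(c₁,f₂,f₃) ∣ f₁ and
gcd(c₁,f₁,f₂) ∣ f₃: two such tuples are ψ-equivalent iff f₁ ≡ f₁′, f₃ ≡ f₃′,
f₄ ≡ f₄′ (mod c₁), f₂ = f₂′, and c₁t₁+f₁f₄, c₁t₂+f₃f₄ agree modulo
c₁·gcd(c₁,f₁,f₂,f₃). -/
theorem classification_case2 (c1 f1 f2 f3 f4 t1 t2 f1' f2' f3' f4' t1' t2' : ℤ)
    (hc1 : c1 ≠ 0)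
    (h1 : (Int.gcd c1 (Int.gcd f2 f3) : ℤ) ∣ f1)
    (h1' : (Int.gcd c1 (Int.gcd f2' f3') : ℤ) ∣ f1')
    (h3 : (Int.gcd c1 (Int.gcd f1 f2) : ℤ) ∣ f3)
    (h3' : (Int.gcd c1 (Int.gcd f1' f2') : ℤ) ∣ f3') :
    PsiEquiv ⟨c1, 0, c1, 0, 0, 0, f1, f2, f3, f4, t1, t2⟩
        ⟨c1, 0, c1, 0, 0, 0, f1', f2', f3', f4', t1', t2'⟩ ↔
      (c1 ∣ f1 - f1' ∧
        f2 = f2' ∧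
        c1 ∣ f3 - f3' ∧
        c1 ∣ f4 - f4' ∧
        c1 * (Int.gcd c1 (Int.gcd f1 (Int.gcd f2 f3)) : ℤ) ∣
          (c1 * t1 + f1 * f4) - (c1 * t1' + f1' * f4') ∧
        c1 * (Int.gcd c1 (Int.gcd f1 (Int.gcd f2 f3)) : ℤ) ∣
          (c1 * t2 + f3 * f4) - (c1 * t2' + f3' * f4')) := by
  constructor
  · intro h
    obtain ⟨_, _, _, _, _, _, hp⟩ := PsiAux.inv_of_psiEquiv h
    obtain ⟨p1, p2, p3, p4, p5, p6⟩ := hp rfl rfl rfl rfl rfl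
    exact ⟨p1, p2, p3, p4, p5, p6⟩
  · rintro ⟨hd1, rfl, hd3, hd4, hA, hB⟩
    obtain ⟨k1, hk1⟩ := hd1
    obtain ⟨k3, hk3⟩ := hd3
    obtain ⟨k4, hk4⟩ := hd4
    -- move the f-coordinates into place
    have h₁ := PsiAux.iter34 (c1 := c1) (f2 := f2) k1 f1 f3 f4 t1 t2
    rw [show f1 - k1 * c1 = f1' by linear_combination hk1] at h₁
    have h₂ := PsiAux.iter14 (c1 := c1) (f2 := f2) (-k3) f1' f3 f4 (t1 + k1 * f4) t2
    rw [show f3 + -k3 * c1 = f3' by linear_combination hk3] at h₂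
    have h₃ := PsiAux.iter21 (c1 := c1) (f2 := f2) k4 f1' f3' f4 (t1 + k1 * f4) (t2 - -k3 * f4)
    rw [show f4 - k4 * c1 = f4' by linear_combination hk4] at h₃
    have hTy : PsiEquiv (PsiAux.X c1 f2 f1 f3 f4 t1 t2)
        (PsiAux.X c1 f2 f1' f3' f4' (t1 + k1 * f4 + k4 * f1') (t2 - -k3 * f4)) :=
      PsiAux.psiEquiv_trans h₁ (PsiAux.psiEquiv_trans h₂ h₃)
    -- invariants of the constructed chain
    obtain ⟨_, _, _, _, _, _, hp⟩ := PsiAux.inv_of_psiEquiv hTy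
    obtain ⟨_, _, _, _, q5, q6⟩ := hp rfl rfl rfl rfl rfl
    simp only [PsiAux.IA, PsiAux.IB, PsiAux.IG, PsiAux.X] at q5 q6
    obtain ⟨a, ha⟩ := q5
    obtain ⟨b, hb⟩ := hA
    obtain ⟨a', ha'⟩ := q6
    obtain ⟨b', hb'⟩ := hB
    have hy1 : c1 * (Int.gcd c1 (Int.gcd f1 (Int.gcd f2 f3)) : ℤ) ∣
        c1 * (t1' - (t1 + k1 * f4 + k4 * f1')) := ⟨a - b, by linear_combination ha - hb⟩
    have hy2 : c1 * (Int.gcd c1 (Int.gcd f1 (Int.gcd f2 f3)) : ℤ) ∣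
        c1 * (t2' - (t2 - -k3 * f4)) := ⟨a' - b', by linear_combination ha' - hb'⟩
    obtain ⟨m, hm⟩ := (mul_dvd_mul_iff_left hc1).mp hy1
    obtain ⟨n, hn⟩ := (mul_dvd_mul_iff_left hc1).mp hy2
    -- identify the two shift gcds with the main gcd
    have hdd1 : c1 ∣ f1 - f1' := ⟨k1, hk1⟩
    have hdd3 : c1 ∣ f3 - f3' := ⟨k3, hk3⟩
    obtain ⟨G1, G2, G3, G4⟩ :=
      (PsiAux.dvd_gcd4_iff (d := (Int.gcd c1 (Int.gcd f1 (Int.gcd f2 f3)) : ℤ))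
        c1 f1 f2 f3).mp dvd_rfl
    have E1 : (Int.gcd c1 (Int.gcd f2 f3') : ℤ) =
        (Int.gcd c1 (Int.gcd f1 (Int.gcd f2 f3)) : ℤ) := by
      have h : Int.gcd c1 (Int.gcd f2 f3') = Int.gcd c1 (Int.gcd f1 (Int.gcd f2 f3)) := by
        apply Nat.dvd_antisymm <;> rw [← Int.natCast_dvd_natCast]
        · obtain ⟨d1, d2, d3⟩ :=
            (PsiAux.dvd_gcd3_iff (d := (Int.gcd c1 (Int.gcd f2 f3') : ℤ)) c1 f2 f3').mp dvd_rfl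
          rw [PsiAux.dvd_gcd4_iff]
          refine ⟨d1, ?_, d2, ?_⟩
          · have := dvd_add h1' (d1.trans hdd1); simpa using this
          · have := dvd_add d3 (d1.trans hdd3); simpa using this
        · rw [PsiAux.dvd_gcd3_iff]
          refine ⟨G1, G3, ?_⟩
          have := dvd_sub G4 (G1.trans hdd3); simpa using this
      exact_mod_cast congrArg (Nat.cast : ℕ → ℤ) h
    have E2 : (Int.gcd c1 (Int.gcd f1' f2) : ℤ) =
        (Int.gcd c1 (Int.gcd f1 (Int.gcd f2 f3)) : ℤ) := by
      have h : Int.gcd c1 (Int.gcd f1' f2) = Int.gcd c1 (Int.gcd f1 (Int.gcd f2 f3)) := by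
        apply Nat.dvd_antisymm <;> rw [← Int.natCast_dvd_natCast]
        · obtain ⟨d1, d2, d3⟩ :=
            (PsiAux.dvd_gcd3_iff (d := (Int.gcd c1 (Int.gcd f1' f2) : ℤ)) c1 f1' f2).mp dvd_rfl
          rw [PsiAux.dvd_gcd4_iff]
          refine ⟨d1, ?_, d3, ?_⟩
          · have := dvd_add d2 (d1.trans hdd1); simpa using this
          · have := dvd_add h3' (d1.trans hdd3); simpa using this
        · rw [PsiAux.dvd_gcd3_iff]
          refine ⟨G1, ?_, G3⟩
          have := dvd_sub G2 (G1.trans hdd1); simpa using this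
      exact_mod_cast congrArg (Nat.cast : ℕ → ℤ) h
    -- final pure shift
    have hSh := PsiAux.Sh_main (c1 := c1) (f2 := f2) (f1 := f1') (f3 := f3') (f4 := f4') m n
    rw [E1, E2] at hSh
    have hfin := hSh (t1 + k1 * f4 + k4 * f1') (t2 - -k3 * f4)
    rw [show t1 + k1 * f4 + k4 * f1' + m * (Int.gcd c1 (Int.gcd f1 (Int.gcd f2 f3)) : ℤ) = t1'
        by linear_combination -hm,
      show t2 - -k3 * f4 + n * (Int.gcd c1 (Int.gcd f1 (Int.gcd f2 f3)) : ℤ) = t2'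
        by linear_combination -hn] at hfin
    exact PsiAux.psiEquiv_trans hTy hfin
end

section
/- Let T = (c₁,c₂,0,c₄,c₅,0,f₁,f₂,f₃,f₄,t₁,t₂) and T′ = (c₁,c₂,0,c₄,c₅,0,f₁′,f₂′,f₃′,f₄′,t₁′,t₂′) be tuples in ℤ¹² with the same values c₁, c₂, c₄, c₅, all nonzero, and with gcd(c₁,c₄) = 1 and gcd(c₂,c₅) = 1. Then T and T′ are ψ-equivalent if and only if: f₁ ≡ f₁′ (mod gcd(c₁,c₅)); f₂ ≡ f₂′ (mod gcd(c₂,c₄)); f₃ ≡ f₃′ (mod gcd(c₄,c₅)); and f₄ ≡ f₄′ (mod gcd(c₁,c₂)). -/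
open Relation

lemma step' (g : Equiv.Perm Tuple) (hg : g ∈ psiMoves) (x y : Tuple) (h : g x = y) :
    PsiEquiv x y := EqvGen.rel _ _ ⟨g, hg, h⟩

lemma step'' (g : Equiv.Perm Tuple) (hg : g ∈ psiMoves) (x y : Tuple) (h : g y = x) :
    PsiEquiv x y := EqvGen.symm _ _ (EqvGen.rel _ _ ⟨g, hg, h⟩)

lemma peq_congr (x y y' : Tuple) (h : PsiEquiv x y) (e : y = y') : PsiEquiv x y' := e ▸ h

lemma pow21 (c1 c2 c3 c4 c5 c6 f1 f2 f3 f4 t1 t2 : ℤ) (k : ℤ) :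
    PsiEquiv ⟨c1,c2,c3,c4,c5,c6,f1,f2,f3,f4,t1,t2⟩ ⟨c1,c2,c3,c4,c5,c6,f1,f2,f3+k*c5,f4-k*c1,t1+k*f1,t2⟩ := by
  induction k using Int.induction_on with
  | zero => simp only [Int.cast_zero, zero_mul, add_zero, sub_zero]; exact EqvGen.refl _
  | succ n ih =>
      refine EqvGen.trans _ _ _ ih (step' psi21 (by simp [psiMoves]) _ _ ?_)
      simp only [psi21, Equiv.coe_fn_mk, Tuple.mk.injEq]
      and_intros <;> push_cast <;> ring
  | pred n ih =>
      refine EqvGen.trans _ _ _ ih (step'' psi21 (by simp [psiMoves]) _ _ ?_)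
      simp only [psi21, Equiv.coe_fn_mk, Tuple.mk.injEq]
      and_intros <;> push_cast <;> ring

lemma pow41 (c1 c2 c3 c4 c5 c6 f1 f2 f3 f4 t1 t2 : ℤ) (k : ℤ) :
    PsiEquiv ⟨c1,c2,c3,c4,c5,c6,f1,f2,f3,f4,t1,t2⟩ ⟨c1,c2,c3,c4,c5,c6,f1,f2+k*c6,f3-k*c5,f4,t1,t2-k*f1⟩ := by
  induction k using Int.induction_on with
  | zero => simp only [Int.cast_zero, zero_mul, add_zero, sub_zero]; exact EqvGen.refl _
  | succ n ih =>
      refine EqvGen.trans _ _ _ ih (step' psi41 (by simp [psiMoves]) _ _ ?_)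
      simp only [psi41, Equiv.coe_fn_mk, Tuple.mk.injEq]
      and_intros <;> push_cast <;> ring
  | pred n ih =>
      refine EqvGen.trans _ _ _ ih (step'' psi41 (by simp [psiMoves]) _ _ ?_)
      simp only [psi41, Equiv.coe_fn_mk, Tuple.mk.injEq]
      and_intros <;> push_cast <;> ring

lemma pow12 (c1 c2 c3 c4 c5 c6 f1 f2 f3 f4 t1 t2 : ℤ) (k : ℤ) :
    PsiEquiv ⟨c1,c2,c3,c4,c5,c6,f1,f2,f3,f4,t1,t2⟩ ⟨c1,c2,c3,c4,c5,c6,f1,f2,f3-k*c4,f4+k*c2,t1+k*f2,t2⟩ := by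
  induction k using Int.induction_on with
  | zero => simp only [Int.cast_zero, zero_mul, add_zero, sub_zero]; exact EqvGen.refl _
  | succ n ih =>
      refine EqvGen.trans _ _ _ ih (step' psi12 (by simp [psiMoves]) _ _ ?_)
      simp only [psi12, Equiv.coe_fn_mk, Tuple.mk.injEq]
      and_intros <;> push_cast <;> ring
  | pred n ih =>
      refine EqvGen.trans _ _ _ ih (step'' psi12 (by simp [psiMoves]) _ _ ?_)
      simp only [psi12, Equiv.coe_fn_mk, Tuple.mk.injEq]
      and_intros <;> push_cast <;> ring

lemma pow32 (c1 c2 c3 c4 c5 c6 f1 f2 f3 f4 t1 t2 : ℤ) (k : ℤ) :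
    PsiEquiv ⟨c1,c2,c3,c4,c5,c6,f1,f2,f3,f4,t1,t2⟩ ⟨c1,c2,c3,c4,c5,c6,f1+k*c6,f2,f3,f4-k*c2,t1,t2-k*f2⟩ := by
  induction k using Int.induction_on with
  | zero => simp only [Int.cast_zero, zero_mul, add_zero, sub_zero]; exact EqvGen.refl _
  | succ n ih =>
      refine EqvGen.trans _ _ _ ih (step' psi32 (by simp [psiMoves]) _ _ ?_)
      simp only [psi32, Equiv.coe_fn_mk, Tuple.mk.injEq]
      and_intros <;> push_cast <;> ring
  | pred n ih =>
      refine EqvGen.trans _ _ _ ih (step'' psi32 (by simp [psiMoves]) _ _ ?_)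
      simp only [psi32, Equiv.coe_fn_mk, Tuple.mk.injEq]
      and_intros <;> push_cast <;> ring

lemma pow43 (c1 c2 c3 c4 c5 c6 f1 f2 f3 f4 t1 t2 : ℤ) (k : ℤ) :
    PsiEquiv ⟨c1,c2,c3,c4,c5,c6,f1,f2,f3,f4,t1,t2⟩ ⟨c1,c2,c3,c4,c5,c6,f1+k*c5,f2-k*c4,f3,f4,t1+k*f3,t2⟩ := by
  induction k using Int.induction_on with
  | zero => simp only [Int.cast_zero, zero_mul, add_zero, sub_zero]; exact EqvGen.refl _
  | succ n ih =>
      refine EqvGen.trans _ _ _ ih (step' psi43 (by simp [psiMoves]) _ _ ?_)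
      simp only [psi43, Equiv.coe_fn_mk, Tuple.mk.injEq]
      and_intros <;> push_cast <;> ring
  | pred n ih =>
      refine EqvGen.trans _ _ _ ih (step'' psi43 (by simp [psiMoves]) _ _ ?_)
      simp only [psi43, Equiv.coe_fn_mk, Tuple.mk.injEq]
      and_intros <;> push_cast <;> ring

lemma pow23 (c1 c2 c3 c4 c5 c6 f1 f2 f3 f4 t1 t2 : ℤ) (k : ℤ) :
    PsiEquiv ⟨c1,c2,c3,c4,c5,c6,f1,f2,f3,f4,t1,t2⟩ ⟨c1,c2,c3,c4,c5,c6,f1-k*c5,f2,f3,f4+k*c3,t1,t2-k*f3⟩ := by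
  induction k using Int.induction_on with
  | zero => simp only [Int.cast_zero, zero_mul, add_zero, sub_zero]; exact EqvGen.refl _
  | succ n ih =>
      refine EqvGen.trans _ _ _ ih (step' psi23 (by simp [psiMoves]) _ _ ?_)
      simp only [psi23, Equiv.coe_fn_mk, Tuple.mk.injEq]
      and_intros <;> push_cast <;> ring
  | pred n ih =>
      refine EqvGen.trans _ _ _ ih (step'' psi23 (by simp [psiMoves]) _ _ ?_)
      simp only [psi23, Equiv.coe_fn_mk, Tuple.mk.injEq]
      and_intros <;> push_cast <;> ring

lemma pow34 (c1 c2 c3 c4 c5 c6 f1 f2 f3 f4 t1 t2 : ℤ) (k : ℤ) :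
    PsiEquiv ⟨c1,c2,c3,c4,c5,c6,f1,f2,f3,f4,t1,t2⟩ ⟨c1,c2,c3,c4,c5,c6,f1-k*c1,f2+k*c2,f3,f4,t1+k*f4,t2⟩ := by
  induction k using Int.induction_on with
  | zero => simp only [Int.cast_zero, zero_mul, add_zero, sub_zero]; exact EqvGen.refl _
  | succ n ih =>
      refine EqvGen.trans _ _ _ ih (step' psi34 (by simp [psiMoves]) _ _ ?_)
      simp only [psi34, Equiv.coe_fn_mk, Tuple.mk.injEq]
      and_intros <;> push_cast <;> ring
  | pred n ih =>
      refine EqvGen.trans _ _ _ ih (step'' psi34 (by simp [psiMoves]) _ _ ?_)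
      simp only [psi34, Equiv.coe_fn_mk, Tuple.mk.injEq]
      and_intros <;> push_cast <;> ring

lemma pow14 (c1 c2 c3 c4 c5 c6 f1 f2 f3 f4 t1 t2 : ℤ) (k : ℤ) :
    PsiEquiv ⟨c1,c2,c3,c4,c5,c6,f1,f2,f3,f4,t1,t2⟩ ⟨c1,c2,c3,c4,c5,c6,f1,f2-k*c2,f3+k*c3,f4,t1,t2-k*f4⟩ := by
  induction k using Int.induction_on with
  | zero => simp only [Int.cast_zero, zero_mul, add_zero, sub_zero]; exact EqvGen.refl _
  | succ n ih =>
      refine EqvGen.trans _ _ _ ih (step' psi14 (by simp [psiMoves]) _ _ ?_)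
      simp only [psi14, Equiv.coe_fn_mk, Tuple.mk.injEq]
      and_intros <;> push_cast <;> ring
  | pred n ih =>
      refine EqvGen.trans _ _ _ ih (step'' psi14 (by simp [psiMoves]) _ _ ?_)
      simp only [psi14, Equiv.coe_fn_mk, Tuple.mk.injEq]
      and_intros <;> push_cast <;> ring

lemma wa (c1 c2 c3 c4 c5 c6 f1 f2 f3 f4 t1 t2 k : ℤ) :
    PsiEquiv ⟨c1,c2,c3,c4,c5,c6,f1,f2,f3,f4,t1,t2⟩
      ⟨c1,c2,c3,c4,c5,c6,f1,f2,f3,f4,t1,t2-k*c1⟩ := by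
  refine EqvGen.trans _ _ _ (pow41 c1 c2 c3 c4 c5 c6 f1 f2 f3 f4 t1 t2 k) ?_
  refine EqvGen.trans _ _ _ (step' psi34 (by simp [psiMoves]) _
    (⟨c1,c2,c3,c4,c5,c6,f1-c1,f2+k*c6+c2,f3-k*c5,f4,t1+f4,t2-k*f1⟩ : Tuple)
    (by simp only [psi34, Equiv.coe_fn_mk, Tuple.mk.injEq]; try (and_intros <;> (first | trivial | ring)))) ?_
  refine EqvGen.trans _ _ _ (peq_congr _ _
    (⟨c1,c2,c3,c4,c5,c6,f1-c1,f2+c2,f3,f4,t1+f4,t2-k*c1⟩ : Tuple)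
    (pow41 c1 c2 c3 c4 c5 c6 (f1-c1) (f2+k*c6+c2) (f3-k*c5) f4 (t1+f4) (t2-k*f1) (-k))
    (by simp only [Tuple.mk.injEq]; try (and_intros <;> (first | trivial | ring)))) ?_
  exact step'' psi34 (by simp [psiMoves]) _ _
    (by simp only [psi34, Equiv.coe_fn_mk, Tuple.mk.injEq]; try (and_intros <;> (first | trivial | ring)))

lemma wb (c1 c2 c3 c4 c5 c6 f1 f2 f3 f4 t1 t2 k : ℤ) :
    PsiEquiv ⟨c1,c2,c3,c4,c5,c6,f1,f2,f3,f4,t1,t2⟩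
      ⟨c1,c2,c3,c4,c5,c6,f1,f2,f3,f4,t1,t2-k*c4⟩ := by
  refine EqvGen.trans _ _ _ (pow23 c1 c2 c3 c4 c5 c6 f1 f2 f3 f4 t1 t2 k) ?_
  refine EqvGen.trans _ _ _ (step' psi12 (by simp [psiMoves]) _
    (⟨c1,c2,c3,c4,c5,c6,f1-k*c5,f2,f3-c4,f4+k*c3+c2,t1+f2,t2-k*f3⟩ : Tuple)
    (by simp only [psi12, Equiv.coe_fn_mk, Tuple.mk.injEq]; try (and_intros <;> (first | trivial | ring)))) ?_
  refine EqvGen.trans _ _ _ (peq_congr _ _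
    (⟨c1,c2,c3,c4,c5,c6,f1,f2,f3-c4,f4+c2,t1+f2,t2-k*c4⟩ : Tuple)
    (pow23 c1 c2 c3 c4 c5 c6 (f1-k*c5) f2 (f3-c4) (f4+k*c3+c2) (t1+f2) (t2-k*f3) (-k))
    (by simp only [Tuple.mk.injEq]; try (and_intros <;> (first | trivial | ring)))) ?_
  exact step'' psi12 (by simp [psiMoves]) _ _
    (by simp only [psi12, Equiv.coe_fn_mk, Tuple.mk.injEq]; try (and_intros <;> (first | trivial | ring)))

lemma wc (c1 c2 c3 c4 c5 c6 f1 f2 f3 f4 t1 t2 k : ℤ) :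
    PsiEquiv ⟨c1,c2,c3,c4,c5,c6,f1,f2,f3,f4,t1,t2⟩
      ⟨c1,c2,c3,c4,c5,c6,f1,f2,f3,f4,t1+k*c5,t2-k*c5⟩ := by
  refine EqvGen.trans _ _ _ (pow21 c1 c2 c3 c4 c5 c6 f1 f2 f3 f4 t1 t2 k) ?_
  refine EqvGen.trans _ _ _ (step' psi23 (by simp [psiMoves]) _
    (⟨c1,c2,c3,c4,c5,c6,f1-c5,f2,f3+k*c5,f4-k*c1+c3,t1+k*f1,t2-(f3+k*c5)⟩ : Tuple)
    (by simp only [psi23, Equiv.coe_fn_mk, Tuple.mk.injEq]; try (and_intros <;> (first | trivial | ring)))) ?_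
  refine EqvGen.trans _ _ _ (peq_congr _ _
    (⟨c1,c2,c3,c4,c5,c6,f1-c5,f2,f3,f4+c3,t1+k*c5,t2-f3-k*c5⟩ : Tuple)
    (pow21 c1 c2 c3 c4 c5 c6 (f1-c5) f2 (f3+k*c5) (f4-k*c1+c3) (t1+k*f1) (t2-(f3+k*c5)) (-k))
    (by simp only [Tuple.mk.injEq]; try (and_intros <;> (first | trivial | ring)))) ?_
  exact step'' psi23 (by simp [psiMoves]) _ _
    (by simp only [psi23, Equiv.coe_fn_mk, Tuple.mk.injEq]; try (and_intros <;> (first | trivial | ring)))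

lemma wd (c1 c2 c3 c4 c5 c6 f1 f2 f3 f4 t1 t2 k : ℤ) :
    PsiEquiv ⟨c1,c2,c3,c4,c5,c6,f1,f2,f3,f4,t1,t2⟩
      ⟨c1,c2,c3,c4,c5,c6,f1,f2,f3,f4,t1+k*c2,t2-k*c2⟩ := by
  refine EqvGen.trans _ _ _ (pow12 c1 c2 c3 c4 c5 c6 f1 f2 f3 f4 t1 t2 k) ?_
  refine EqvGen.trans _ _ _ (step' psi14 (by simp [psiMoves]) _
    (⟨c1,c2,c3,c4,c5,c6,f1,f2-c2,f3-k*c4+c3,f4+k*c2,t1+k*f2,t2-(f4+k*c2)⟩ : Tuple)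
    (by simp only [psi14, Equiv.coe_fn_mk, Tuple.mk.injEq]; try (and_intros <;> (first | trivial | ring)))) ?_
  refine EqvGen.trans _ _ _ (peq_congr _ _
    (⟨c1,c2,c3,c4,c5,c6,f1,f2-c2,f3+c3,f4,t1+k*c2,t2-f4-k*c2⟩ : Tuple)
    (pow12 c1 c2 c3 c4 c5 c6 f1 (f2-c2) (f3-k*c4+c3) (f4+k*c2) (t1+k*f2) (t2-(f4+k*c2)) (-k))
    (by simp only [Tuple.mk.injEq]; try (and_intros <;> (first | trivial | ring)))) ?_
  exact step'' psi14 (by simp [psiMoves]) _ _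
    (by simp only [psi14, Equiv.coe_fn_mk, Tuple.mk.injEq]; try (and_intros <;> (first | trivial | ring)))

lemma adjust_f1 (c1 c2 c4 c5 F1 F2 F3 F4 T1 T2 a b : ℤ) :
    ∃ s1 s2, PsiEquiv ⟨c1,c2,0,c4,c5,0,F1,F2,F3,F4,T1,T2⟩
      ⟨c1,c2,0,c4,c5,0,F1+a*c1+b*c5,F2,F3,F4,s1,s2⟩ := by
  refine ⟨T1+(-a)*F4, T2-(-a)*F4-(-b)*(F3+(-a)*0), ?_⟩
  refine peq_congr _ _ _ (EqvGen.trans _ _ _ (EqvGen.trans _ _ _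
    (pow34 c1 c2 0 c4 c5 0 F1 F2 F3 F4 T1 T2 (-a))
    (pow14 _ _ _ _ _ _ _ _ _ _ _ _ (-a))) (pow23 _ _ _ _ _ _ _ _ _ _ _ _ (-b))) ?_
  simp only [Tuple.mk.injEq]; and_intros <;> (first | trivial | ring)

lemma adjust_f2 (c1 c2 c4 c5 F1 F2 F3 F4 T1 T2 a b : ℤ) :
    ∃ s1 s2, PsiEquiv ⟨c1,c2,0,c4,c5,0,F1,F2,F3,F4,T1,T2⟩
      ⟨c1,c2,0,c4,c5,0,F1,F2+a*c2+b*c4,F3,F4,s1,s2⟩ := by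
  refine ⟨T1+(-b)*(F3+(-a)*0), T2-(-a)*F4-(-b)*(F3+(-a)*0), ?_⟩
  refine peq_congr _ _ _ (EqvGen.trans _ _ _ (EqvGen.trans _ _ _
    (pow14 c1 c2 0 c4 c5 0 F1 F2 F3 F4 T1 T2 (-a))
    (pow43 _ _ _ _ _ _ _ _ _ _ _ _ (-b))) (pow23 _ _ _ _ _ _ _ _ _ _ _ _ (-b))) ?_
  simp only [Tuple.mk.injEq]; and_intros <;> (first | trivial | ring)

lemma adjust_f3 (c1 c2 c4 c5 F1 F2 F3 F4 T1 T2 a b : ℤ) :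
    ∃ s1 s2, PsiEquiv ⟨c1,c2,0,c4,c5,0,F1,F2,F3,F4,T1,T2⟩
      ⟨c1,c2,0,c4,c5,0,F1,F2,F3+a*c4+b*c5,F4,s1,s2⟩ := by
  refine ⟨T1+(-a)*F2, T2-(-a)*F2-(-b)*(F1+(-a)*0), ?_⟩
  refine peq_congr _ _ _ (EqvGen.trans _ _ _ (EqvGen.trans _ _ _
    (pow12 c1 c2 0 c4 c5 0 F1 F2 F3 F4 T1 T2 (-a))
    (pow32 _ _ _ _ _ _ _ _ _ _ _ _ (-a))) (pow41 _ _ _ _ _ _ _ _ _ _ _ _ (-b))) ?_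
  simp only [Tuple.mk.injEq]; and_intros <;> (first | trivial | ring)

lemma adjust_f4 (c1 c2 c4 c5 F1 F2 F3 F4 T1 T2 a b : ℤ) :
    ∃ s1 s2, PsiEquiv ⟨c1,c2,0,c4,c5,0,F1,F2,F3,F4,T1,T2⟩
      ⟨c1,c2,0,c4,c5,0,F1,F2,F3,F4+a*c1+b*c2,s1,s2⟩ := by
  refine ⟨T1+(-a)*F1, T2-(-a)*F1-(-b)*(F2+(-a)*0), ?_⟩
  refine peq_congr _ _ _ (EqvGen.trans _ _ _ (EqvGen.trans _ _ _
    (pow21 c1 c2 0 c4 c5 0 F1 F2 F3 F4 T1 T2 (-a))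
    (pow41 _ _ _ _ _ _ _ _ _ _ _ _ (-a))) (pow32 _ _ _ _ _ _ _ _ _ _ _ _ (-b))) ?_
  simp only [Tuple.mk.injEq]; and_intros <;> (first | trivial | ring)

lemma adjust_t (c1 c2 c3 c4 c5 c6 F1 F2 F3 F4 s1 s2 u1 u2 : ℤ)
    (h14 : Int.gcd c1 c4 = 1) (h25 : Int.gcd c2 c5 = 1) :
    PsiEquiv ⟨c1,c2,c3,c4,c5,c6,F1,F2,F3,F4,s1,s2⟩
      ⟨c1,c2,c3,c4,c5,c6,F1,F2,F3,F4,u1,u2⟩ := by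
  have hb1 : c2 * Int.gcdA c2 c5 + c5 * Int.gcdB c2 c5 = 1 := by
    have h := Int.gcd_eq_gcd_ab c2 c5
    rw [h25] at h; exact_mod_cast h.symm
  have hb2 : c1 * Int.gcdA c1 c4 + c4 * Int.gcdB c1 c4 = 1 := by
    have h := Int.gcd_eq_gcd_ab c1 c4
    rw [h14] at h; exact_mod_cast h.symm
  refine EqvGen.trans _ _ _
    (wd c1 c2 c3 c4 c5 c6 F1 F2 F3 F4 s1 s2 ((u1-s1) * Int.gcdA c2 c5)) ?_
  refine EqvGen.trans _ _ _ (peq_congr _ _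
    (⟨c1,c2,c3,c4,c5,c6,F1,F2,F3,F4,u1,s2-(u1-s1)⟩ : Tuple)
    (wc c1 c2 c3 c4 c5 c6 F1 F2 F3 F4 _ _ ((u1-s1) * Int.gcdB c2 c5))
    (by simp only [Tuple.mk.injEq]; and_intros <;>
      first
        | trivial
        | linear_combination (u1-s1) * hb1
        | linear_combination (s1-u1) * hb1)) ?_
  refine peq_congr _ _ _ (EqvGen.trans _ _ _
    (wa c1 c2 c3 c4 c5 c6 F1 F2 F3 F4 u1 (s2-(u1-s1)) (-((u2-s2+(u1-s1)) * Int.gcdA c1 c4)))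
    (wb _ _ _ _ _ _ _ _ _ _ _ _ (-((u2-s2+(u1-s1)) * Int.gcdB c1 c4)))) ?_
  simp only [Tuple.mk.injEq]; and_intros <;>
    first
      | trivial
      | linear_combination (u2-s2+(u1-s1)) * hb2

def PsiInv (x y : Tuple) : Prop :=
  x.c1 = y.c1 ∧ x.c2 = y.c2 ∧ x.c3 = y.c3 ∧ x.c4 = y.c4 ∧ x.c5 = y.c5 ∧ x.c6 = y.c6 ∧
  (∃ a b c : ℤ, y.f1 = x.f1 + a*x.c1 + b*x.c5 + c*x.c6) ∧
  (∃ a b c : ℤ, y.f2 = x.f2 + a*x.c2 + b*x.c4 + c*x.c6) ∧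
  (∃ a b c : ℤ, y.f3 = x.f3 + a*x.c3 + b*x.c4 + c*x.c5) ∧
  (∃ a b c : ℤ, y.f4 = x.f4 + a*x.c1 + b*x.c2 + c*x.c3)

lemma inv_of {x y : Tuple} (h : PsiEquiv x y) : PsiInv x y := by
  induction h with
  | rel x y hxy =>
      obtain ⟨g, hg, rfl⟩ := hxy
      simp only [psiMoves, List.mem_cons, List.not_mem_nil, or_false] at hg
      rcases hg with rfl|rfl|rfl|rfl|rfl|rfl|rfl|rfl
      · exact ⟨rfl,rfl,rfl,rfl,rfl,rfl,⟨0,0,0,by simp [psi21]; try ring⟩,⟨0,0,0,by simp [psi21]; try ring⟩,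
          ⟨0,0,1,by simp [psi21]; try ring⟩,⟨-1,0,0,by simp [psi21]; try ring⟩⟩
      · exact ⟨rfl,rfl,rfl,rfl,rfl,rfl,⟨0,0,0,by simp [psi41]; try ring⟩,⟨0,0,1,by simp [psi41]; try ring⟩,
          ⟨0,0,-1,by simp [psi41]; try ring⟩,⟨0,0,0,by simp [psi41]; try ring⟩⟩
      · exact ⟨rfl,rfl,rfl,rfl,rfl,rfl,⟨0,0,0,by simp [psi12]; try ring⟩,⟨0,0,0,by simp [psi12]; try ring⟩,
          ⟨0,-1,0,by simp [psi12]; try ring⟩,⟨0,1,0,by simp [psi12]; try ring⟩⟩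
      · exact ⟨rfl,rfl,rfl,rfl,rfl,rfl,⟨0,0,1,by simp [psi32]; try ring⟩,⟨0,0,0,by simp [psi32]; try ring⟩,
          ⟨0,0,0,by simp [psi32]; try ring⟩,⟨0,-1,0,by simp [psi32]; try ring⟩⟩
      · exact ⟨rfl,rfl,rfl,rfl,rfl,rfl,⟨0,1,0,by simp [psi43]; try ring⟩,⟨0,-1,0,by simp [psi43]; try ring⟩,
          ⟨0,0,0,by simp [psi43]; try ring⟩,⟨0,0,0,by simp [psi43]; try ring⟩⟩
      · exact ⟨rfl,rfl,rfl,rfl,rfl,rfl,⟨0,-1,0,by simp [psi23]; try ring⟩,⟨0,0,0,by simp [psi23]; try ring⟩,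
          ⟨0,0,0,by simp [psi23]; try ring⟩,⟨0,0,1,by simp [psi23]; try ring⟩⟩
      · exact ⟨rfl,rfl,rfl,rfl,rfl,rfl,⟨-1,0,0,by simp [psi34]; try ring⟩,⟨1,0,0,by simp [psi34]; try ring⟩,
          ⟨0,0,0,by simp [psi34]; try ring⟩,⟨0,0,0,by simp [psi34]; try ring⟩⟩
      · exact ⟨rfl,rfl,rfl,rfl,rfl,rfl,⟨0,0,0,by simp [psi14]; try ring⟩,⟨-1,0,0,by simp [psi14]; try ring⟩,
          ⟨1,0,0,by simp [psi14]; try ring⟩,⟨0,0,0,by simp [psi14]; try ring⟩⟩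
  | refl x =>
      exact ⟨rfl,rfl,rfl,rfl,rfl,rfl,⟨0,0,0,by ring⟩,⟨0,0,0,by ring⟩,⟨0,0,0,by ring⟩,⟨0,0,0,by ring⟩⟩
  | symm x y h ih =>
      obtain ⟨e1,e2,e3,e4,e5,e6,⟨a1,b1,d1,h1⟩,⟨a2,b2,d2,h2⟩,⟨a3,b3,d3,h3⟩,⟨a4,b4,d4,h4⟩⟩ := ih
      exact ⟨e1.symm,e2.symm,e3.symm,e4.symm,e5.symm,e6.symm,
        ⟨-a1,-b1,-d1, by rw [← e1, ← e5, ← e6]; linear_combination -h1⟩,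
        ⟨-a2,-b2,-d2, by rw [← e2, ← e4, ← e6]; linear_combination -h2⟩,
        ⟨-a3,-b3,-d3, by rw [← e3, ← e4, ← e5]; linear_combination -h3⟩,
        ⟨-a4,-b4,-d4, by rw [← e1, ← e2, ← e3]; linear_combination -h4⟩⟩
  | trans x y z hxy hyz ih1 ih2 =>
      obtain ⟨e1,e2,e3,e4,e5,e6,⟨a1,b1,d1,h1⟩,⟨a2,b2,d2,h2⟩,⟨a3,b3,d3,h3⟩,⟨a4,b4,d4,h4⟩⟩ := ih1
      obtain ⟨g1,g2,g3,g4,g5,g6,⟨a1',b1',d1',h1'⟩,⟨a2',b2',d2',h2'⟩,⟨a3',b3',d3',h3'⟩,⟨a4',b4',d4',h4'⟩⟩ := ih2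
      exact ⟨e1.trans g1, e2.trans g2, e3.trans g3, e4.trans g4, e5.trans g5, e6.trans g6,
        ⟨a1+a1', b1+b1', d1+d1', by rw [← e1, ← e5, ← e6] at h1'; linear_combination h1 + h1'⟩,
        ⟨a2+a2', b2+b2', d2+d2', by rw [← e2, ← e4, ← e6] at h2'; linear_combination h2 + h2'⟩,
        ⟨a3+a3', b3+b3', d3+d3', by rw [← e3, ← e4, ← e5] at h3'; linear_combination h3 + h3'⟩,
        ⟨a4+a4', b4+b4', d4+d4', by rw [← e1, ← e2, ← e3] at h4'; linear_combination h4 + h4'⟩⟩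

/-- Classification when c₃ = c₆ = 0, c₁, c₂, c₄, c₅ ≠ 0, gcd(c₁,c₄) = gcd(c₂,c₅) = 1:
two such tuples are ψ-equivalent iff f₁ ≡ f₁′ (mod gcd(c₁,c₅)),
f₂ ≡ f₂′ (mod gcd(c₂,c₄)), f₃ ≡ f₃′ (mod gcd(c₄,c₅)) and f₄ ≡ f₄′ (mod gcd(c₁,c₂)). -/
theorem classification_case4 (c1 c2 c4 c5 f1 f2 f3 f4 t1 t2 f1' f2' f3' f4' t1' t2' : ℤ)
    (hc1 : c1 ≠ 0) (hc2 : c2 ≠ 0) (hc4 : c4 ≠ 0) (hc5 : c5 ≠ 0)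
    (h14 : Int.gcd c1 c4 = 1) (h25 : Int.gcd c2 c5 = 1) :
    PsiEquiv ⟨c1, c2, 0, c4, c5, 0, f1, f2, f3, f4, t1, t2⟩
        ⟨c1, c2, 0, c4, c5, 0, f1', f2', f3', f4', t1', t2'⟩ ↔
      ((Int.gcd c1 c5 : ℤ) ∣ f1 - f1' ∧
        (Int.gcd c2 c4 : ℤ) ∣ f2 - f2' ∧
        (Int.gcd c4 c5 : ℤ) ∣ f3 - f3' ∧
        (Int.gcd c1 c2 : ℤ) ∣ f4 - f4') := by
  constructor
  · intro h
    obtain ⟨-,-,-,-,-,-,⟨a1,b1,d1,h1⟩,⟨a2,b2,d2,h2⟩,⟨a3,b3,d3,h3⟩,⟨a4,b4,d4,h4⟩⟩ := inv_of h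
    simp only at h1 h2 h3 h4
    refine ⟨?_, ?_, ?_, ?_⟩
    · have e : f1 - f1' = (-a1)*c1 + (-b1)*c5 := by linear_combination -h1
      rw [e]
      exact dvd_add (Dvd.dvd.mul_left (Int.gcd_dvd_left _ _) _) (Dvd.dvd.mul_left (Int.gcd_dvd_right _ _) _)
    · have e : f2 - f2' = (-a2)*c2 + (-b2)*c4 := by linear_combination -h2
      rw [e]
      exact dvd_add (Dvd.dvd.mul_left (Int.gcd_dvd_left _ _) _) (Dvd.dvd.mul_left (Int.gcd_dvd_right _ _) _)
    · have e : f3 - f3' = (-b3)*c4 + (-d3)*c5 := by linear_combination -h3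
      rw [e]
      exact dvd_add (Dvd.dvd.mul_left (Int.gcd_dvd_left _ _) _) (Dvd.dvd.mul_left (Int.gcd_dvd_right _ _) _)
    · have e : f4 - f4' = (-a4)*c1 + (-b4)*c2 := by linear_combination -h4
      rw [e]
      exact dvd_add (Dvd.dvd.mul_left (Int.gcd_dvd_left _ _) _) (Dvd.dvd.mul_left (Int.gcd_dvd_right _ _) _)
  · rintro ⟨h1, h2, h3, h4⟩
    obtain ⟨m1, hm1⟩ := h1
    obtain ⟨m2, hm2⟩ := h2
    obtain ⟨m3, hm3⟩ := h3
    obtain ⟨m4, hm4⟩ := h4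
    have hab1 := Int.gcd_eq_gcd_ab c1 c5
    have hab2 := Int.gcd_eq_gcd_ab c2 c4
    have hab3 := Int.gcd_eq_gcd_ab c4 c5
    have hab4 := Int.gcd_eq_gcd_ab c1 c2
    obtain ⟨A1, B1, rfl⟩ : ∃ A B : ℤ, f1' = f1 + A*c1 + B*c5 :=
      ⟨-(m1*Int.gcdA c1 c5), -(m1*Int.gcdB c1 c5), by linear_combination -hm1 - m1 * hab1⟩
    obtain ⟨A2, B2, rfl⟩ : ∃ A B : ℤ, f2' = f2 + A*c2 + B*c4 :=
      ⟨-(m2*Int.gcdA c2 c4), -(m2*Int.gcdB c2 c4), by linear_combination -hm2 - m2 * hab2⟩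
    obtain ⟨A3, B3, rfl⟩ : ∃ A B : ℤ, f3' = f3 + A*c4 + B*c5 :=
      ⟨-(m3*Int.gcdA c4 c5), -(m3*Int.gcdB c4 c5), by linear_combination -hm3 - m3 * hab3⟩
    obtain ⟨A4, B4, rfl⟩ : ∃ A B : ℤ, f4' = f4 + A*c1 + B*c2 :=
      ⟨-(m4*Int.gcdA c1 c2), -(m4*Int.gcdB c1 c2), by linear_combination -hm4 - m4 * hab4⟩
    obtain ⟨s1, s2, H1⟩ := adjust_f1 c1 c2 c4 c5 f1 f2 f3 f4 t1 t2 A1 B1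
    obtain ⟨s1', s2', H2⟩ := adjust_f2 c1 c2 c4 c5 (f1+A1*c1+B1*c5) f2 f3 f4 s1 s2 A2 B2
    obtain ⟨s1'', s2'', H3⟩ :=
      adjust_f3 c1 c2 c4 c5 (f1+A1*c1+B1*c5) (f2+A2*c2+B2*c4) f3 f4 s1' s2' A3 B3
    obtain ⟨s1''', s2''', H4⟩ :=
      adjust_f4 c1 c2 c4 c5 (f1+A1*c1+B1*c5) (f2+A2*c2+B2*c4) (f3+A3*c4+B3*c5) f4 s1'' s2'' A4 B4
    have H5 := adjust_t c1 c2 0 c4 c5 0 (f1+A1*c1+B1*c5) (f2+A2*c2+B2*c4) (f3+A3*c4+B3*c5)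
      (f4+A4*c1+B4*c2) s1''' s2''' t1' t2' h14 h25
    exact EqvGen.trans _ _ _
      (EqvGen.trans _ _ _ (EqvGen.trans _ _ _ (EqvGen.trans _ _ _ H1 H2) H3) H4) H5
end
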